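/- arXiv:2309.17308 — 3 statements merged into one kernel-verified Lean document; each statement's English description precedes it below -/
import Mathlib

section
/- The Poisson algebra C[x_1,...,x_N, y_1,...,y_N]^{S_N} of diagonal S_N-invariants, with Poisson bracket {y_i, x_j} = δ_{ij}, is generated as a Poisson algebra by the two subalgebras C[x_1,...,x_N]^{S_N} and C[y_1,...,y_N]^{S_N}. -/
open MvPolynomial

/-- The standard Poisson bracket on `ℂ[x₁,…,x_N,y₁,…,y_N]` with `{y_i, x_j} = δ_{ij}`:
`{f, g} = ∑ᵢ (∂f/∂yᵢ · ∂g/∂xᵢ − ∂f/∂xᵢ · ∂g/∂yᵢ)`, where `xᵢ = X (inl i)`,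
`yᵢ = X (inr i)`. -/
noncomputable def poissonBracket (N : ℕ) (f g : MvPolynomial (Fin N ⊕ Fin N) ℂ) :
    MvPolynomial (Fin N ⊕ Fin N) ℂ :=
  ∑ i : Fin N,
    (pderiv (Sum.inr i) f * pderiv (Sum.inl i) g -
      pderiv (Sum.inl i) f * pderiv (Sum.inr i) g)

namespace Stmt3Aux
variable (N : ℕ)

/-- The monomial `xᵢ^{c.1} yᵢ^{c.2}`. -/
noncomputable def mono (i : Fin N) (c : ℕ × ℕ) : MvPolynomial (Fin N ⊕ Fin N) ℂ :=
  X (Sum.inl i) ^ c.1 * X (Sum.inr i) ^ c.2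

/-- The polarized power sum `∑ᵢ xᵢ^{c.1} yᵢ^{c.2}`. -/
noncomputable def pp (c : ℕ × ℕ) : MvPolynomial (Fin N ⊕ Fin N) ℂ := ∑ i, mono N i c

lemma mono_mul (i : Fin N) (c d : ℕ × ℕ) :
    mono N i c * mono N i d = mono N i (c + d) := by
  simp [mono, pow_add, Prod.fst_add, Prod.snd_add]; ring

lemma pderiv_pp_inl (i : Fin N) (a : ℕ) :
    pderiv (Sum.inl i) (pp N (a+1, 0)) = (a+1 : ℂ) • (X (Sum.inl i) ^ a) := by
  unfold pp mono
  rw [map_sum, Finset.sum_eq_single i]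
  · simp [pderiv_pow, pderiv_X_self, mul_comm, Algebra.smul_def]
  · intro j _ hj
    simp [pderiv_pow, pderiv_X_of_ne (fun h => hj (Sum.inl.inj h))]
  · simp

lemma pderiv_pp_inr (i : Fin N) (b : ℕ) :
    pderiv (Sum.inr i) (pp N (0, b+1)) = (b+1 : ℂ) • (X (Sum.inr i) ^ b) := by
  unfold pp mono
  rw [map_sum, Finset.sum_eq_single i]
  · simp [pderiv_pow, pderiv_X_self, mul_comm, Algebra.smul_def]
  · intro j _ hj
    simp [pderiv_pow, pderiv_X_of_ne (fun h => hj (Sum.inr.inj h))]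
  · simp

lemma pderiv_pp_inl_y (i : Fin N) (b : ℕ) :
    pderiv (Sum.inl i) (pp N (0, b)) = 0 := by
  unfold pp mono
  rw [map_sum]
  refine Finset.sum_eq_zero fun j _ => ?_
  simp [pderiv_pow, pderiv_X_of_ne (show (Sum.inr j : Fin N ⊕ Fin N) ≠ Sum.inl i by simp)]

lemma pderiv_pp_inr_x (i : Fin N) (a : ℕ) :
    pderiv (Sum.inr i) (pp N (a, 0)) = 0 := by
  unfold pp mono
  rw [map_sum]
  refine Finset.sum_eq_zero fun j _ => ?_
  simp [pderiv_pow, pderiv_X_of_ne (show (Sum.inl j : Fin N ⊕ Fin N) ≠ Sum.inr i by simp)]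

lemma bracket_pp (a b : ℕ) :
    poissonBracket N (pp N (0, b+1)) (pp N (a+1, 0)) = ((a+1 : ℂ) * (b+1 : ℂ)) • pp N (a, b) := by
  unfold poissonBracket
  conv_rhs => rw [pp, Finset.smul_sum]
  refine Finset.sum_congr rfl fun i _ => ?_
  rw [pderiv_pp_inr, pderiv_pp_inl, pderiv_pp_inl_y, pderiv_pp_inr_x, mono]
  rw [smul_mul_smul_comm]
  simp only [sub_zero, zero_mul]
  rw [mul_comm ((b:ℂ)+1) ((a:ℂ)+1), mul_comm (X (Sum.inr i) ^ b)]

section Membership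

variable (S : Subalgebra ℂ (MvPolynomial (Fin N ⊕ Fin N) ℂ))
  (hbr : ∀ f ∈ S, ∀ g ∈ S, poissonBracket N f g ∈ S)
  (hx : (symmetricSubalgebra (Fin N) ℂ).map (rename Sum.inl) ≤ S)
  (hy : (symmetricSubalgebra (Fin N) ℂ).map (rename Sum.inr) ≤ S)

include hx in
lemma pp_x_mem (a : ℕ) : pp N (a, 0) ∈ S := by
  apply hx
  refine ⟨psum (Fin N) ℂ a, (mem_symmetricSubalgebra _).2 (psum_isSymmetric _ _ a), ?_⟩
  rw [psum, map_sum]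
  simp [pp, mono]

include hy in
lemma pp_y_mem (b : ℕ) : pp N (0, b) ∈ S := by
  apply hy
  refine ⟨psum (Fin N) ℂ b, (mem_symmetricSubalgebra _).2 (psum_isSymmetric _ _ b), ?_⟩
  rw [psum, map_sum]
  simp [pp, mono]

include hbr hx hy in
lemma pp_mem (c : ℕ × ℕ) : pp N c ∈ S := by
  obtain ⟨a, b⟩ := c
  have hne : ((a : ℂ) + 1) * ((b : ℂ) + 1) ≠ 0 :=
    mul_ne_zero (by exact_mod_cast Nat.succ_ne_zero a) (by exact_mod_cast Nat.succ_ne_zero b)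
  have key : pp N (a, b)
      = (((a:ℂ)+1) * ((b:ℂ)+1))⁻¹ • poissonBracket N (pp N (0, b+1)) (pp N (a+1, 0)) := by
    rw [bracket_pp, smul_smul, inv_mul_cancel₀ hne, one_smul]
  rw [key]
  exact S.smul_mem (hbr _ (pp_y_mem N S hy (b+1)) _ (pp_x_mem N S hx (a+1))) _

end Membership

/-- Sum over injective tuples of indices of products of `mono`s. -/
noncomputable def q (r : ℕ) (c : Fin r → ℕ × ℕ) : MvPolynomial (Fin N ⊕ Fin N) ℂ :=
  ∑ f ∈ Finset.univ.filter (fun f : Fin r → Fin N => Function.Injective f),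
    ∏ k, mono N (f k) (c k)

lemma q_zero (c : Fin 0 → ℕ × ℕ) : q N 0 c = 1 := by
  rw [q]
  have h : ∀ f ∈ (Finset.univ : Finset (Fin 0 → Fin N)), Function.Injective f :=
    fun f _ a => a.elim0
  rw [Finset.filter_true_of_mem h]
  simp

lemma snoc_mem_iff {r : ℕ} (g : Fin r → Fin N) (j : Fin N) :
    Function.Injective (Fin.snoc g j : Fin (r+1) → Fin N) ↔
      Function.Injective g ∧ ∀ k, g k ≠ j := by
  constructor
  · intro h
    refine ⟨fun a b hab => ?_, fun k hk => ?_⟩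
    · have := h (a₁ := a.castSucc) (a₂ := b.castSucc) (by simpa using hab)
      exact Fin.castSucc_injective _ this
    · have := h (a₁ := k.castSucc) (a₂ := Fin.last r) (by simpa using hk)
      exact absurd this (Fin.ne_of_lt (Fin.castSucc_lt_last k))
  · rintro ⟨hg, hfresh⟩ a b hab
    induction a using Fin.lastCases with
    | last =>
      induction b using Fin.lastCases with
      | last => rfl
      | cast b =>
        simp only [Fin.snoc_last, Fin.snoc_castSucc] at hab
        exact absurd hab.symm (hfresh b)
    | cast a =>
      induction b using Fin.lastCases with
      | last =>
        simp only [Fin.snoc_last, Fin.snoc_castSucc] at hab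
        exact absurd hab (hfresh a)
      | cast b =>
        simp only [Fin.snoc_castSucc] at hab
        exact congrArg Fin.castSucc (hg hab)

lemma q_succ (r : ℕ) (c : Fin (r+1) → ℕ × ℕ) :
    q N r (c ∘ Fin.castSucc) * pp N (c (Fin.last r)) =
      q N (r+1) c + ∑ k : Fin r,
        q N r (Function.update (c ∘ Fin.castSucc) k ((c ∘ Fin.castSucc) k + c (Fin.last r))) := by
  classical
  set c' : Fin r → ℕ × ℕ := c ∘ Fin.castSucc with hc'
  set cl := c (Fin.last r) with hcl
  rw [q, pp, Finset.sum_mul_sum]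
  have split : ∀ g ∈ Finset.univ.filter (fun f : Fin r → Fin N => Function.Injective f),
      ∑ j : Fin N, (∏ k, mono N (g k) (c' k)) * mono N j cl
        = (∑ j ∈ Finset.univ.filter (fun j => ∀ k, g k ≠ j),
            (∏ k, mono N (g k) (c' k)) * mono N j cl)
          + ∑ k : Fin r, (∏ k', mono N (g k') (c' k')) * mono N (g k) cl := by
    intro g hg
    rw [Finset.mem_filter] at hg
    rw [← Finset.sum_filter_add_sum_filter_not Finset.univ (fun j => ∀ k, g k ≠ j)]
    congr 1
    have himg : Finset.univ.filter (fun j => ¬ ∀ k, g k ≠ j) = Finset.image g Finset.univ := by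
      ext j
      simp [eq_comm]
    rw [himg, Finset.sum_image (fun a _ b _ h => hg.2 h)]
  rw [Finset.sum_congr rfl split, Finset.sum_add_distrib]
  congr 1
  · -- first piece equals `q N (r+1) c`
    rw [q, Finset.sum_sigma']
    refine Finset.sum_nbij' (fun p => Fin.snoc p.1 p.2)
      (fun f => ⟨f ∘ Fin.castSucc, f (Fin.last r)⟩) ?_ ?_ ?_ ?_ ?_
    · rintro ⟨g, j⟩ hp
      simp only [Finset.mem_sigma, Finset.mem_filter, Finset.mem_univ, true_and] at hp
      simp only [Finset.mem_filter, Finset.mem_univ, true_and]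
      exact (snoc_mem_iff N g j).2 ⟨hp.1, hp.2⟩
    · intro f hf
      simp only [Finset.mem_filter, Finset.mem_univ, true_and] at hf
      have hsf : (Fin.snoc (f ∘ Fin.castSucc) (f (Fin.last r)) : Fin (r+1) → Fin N) = f := by
        funext a
        induction a using Fin.lastCases with
        | last => simp
        | cast a => simp
      have : Function.Injective (Fin.snoc (f ∘ Fin.castSucc) (f (Fin.last r)) : Fin (r+1) → Fin N) := by
        rw [hsf]; exact hf
      rw [snoc_mem_iff] at this
      simp only [Finset.mem_sigma, Finset.mem_filter, Finset.mem_univ, true_and]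
      exact ⟨this.1, this.2⟩
    · rintro ⟨g, j⟩ hp
      refine Sigma.ext ?_ ?_
      · funext k; simp
      · simp
    · intro f hf
      funext a
      induction a using Fin.lastCases with
      | last => simp
      | cast a => simp
    · rintro ⟨g, j⟩ hp
      rw [Fin.prod_univ_castSucc]
      congr 1
      · exact Finset.prod_congr rfl fun k _ => by simp [hc']
      · simp [hcl]
  · -- second piece equals the sum of `q`s with updated exponents
    rw [Finset.sum_comm]
    refine Finset.sum_congr rfl fun k _ => ?_
    rw [q]
    refine Finset.sum_congr rfl fun g hg => ?_
    rw [Finset.mem_filter] at hg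
    have hupdate : (fun k' => mono N (g k') (Function.update c' k (c' k + cl) k'))
        = Function.update (fun k' => mono N (g k') (c' k')) k (mono N (g k) (c' k + cl)) := by
      funext k'
      by_cases h : k' = k
      · subst h; simp
      · simp [Function.update_of_ne h]
    rw [hupdate, Finset.prod_update_of_mem (Finset.mem_univ k),
      Finset.sdiff_singleton_eq_erase, ← mono_mul,
      ← Finset.mul_prod_erase Finset.univ (fun k' => mono N (g k') (c' k')) (Finset.mem_univ k)]
    ring

lemma q_mem (S : Subalgebra ℂ (MvPolynomial (Fin N ⊕ Fin N) ℂ))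
    (hbr : ∀ f ∈ S, ∀ g ∈ S, poissonBracket N f g ∈ S)
    (hx : (symmetricSubalgebra (Fin N) ℂ).map (rename Sum.inl) ≤ S)
    (hy : (symmetricSubalgebra (Fin N) ℂ).map (rename Sum.inr) ≤ S) :
    ∀ (r : ℕ) (c : Fin r → ℕ × ℕ), q N r c ∈ S := by
  intro r
  induction r with
  | zero => intro c; rw [q_zero]; exact S.one_mem
  | succ r ih =>
    intro c
    have h : q N (r+1) c
        = q N r (c ∘ Fin.castSucc) * pp N (c (Fin.last r)) - ∑ k : Fin r,
          q N r (Function.update (c ∘ Fin.castSucc) k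
            ((c ∘ Fin.castSucc) k + c (Fin.last r))) := by
      rw [q_succ]; ring
    rw [h]
    exact S.sub_mem (S.mul_mem (ih _) (pp_mem N S hbr hx hy _))
      (S.sum_mem (fun k _ => ih _))

lemma monomial_eq_prod (d : (Fin N ⊕ Fin N) →₀ ℕ) :
    (monomial d (1:ℂ)) = ∏ i : Fin N, mono N i (d (Sum.inl i), d (Sum.inr i)) := by
  rw [monomial_eq, map_one, one_mul, Finsupp.prod]
  rw [Finset.prod_subset (Finset.subset_univ d.support)
    (fun v _ hv => by rw [Finsupp.notMem_support_iff.mp hv, pow_zero])]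
  rw [Fintype.prod_sum_type]
  simp only [mono]
  rw [Finset.prod_mul_distrib]

lemma rename_monomial_perm (σ : Equiv.Perm (Fin N)) (d : (Fin N ⊕ Fin N) →₀ ℕ) :
    rename (Sum.map σ σ) (monomial d (1:ℂ))
      = ∏ i : Fin N, mono N (σ i) (d (Sum.inl i), d (Sum.inr i)) := by
  rw [monomial_eq_prod, map_prod]
  refine Finset.prod_congr rfl fun i _ => ?_
  simp [mono]

lemma sum_perm_eq_q (d : (Fin N ⊕ Fin N) →₀ ℕ) :
    ∑ σ : Equiv.Perm (Fin N), rename (Sum.map σ σ) (monomial d (1:ℂ))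
      = q N N (fun i => (d (Sum.inl i), d (Sum.inr i))) := by
  rw [q]
  refine Finset.sum_bij' (fun σ _ => ⇑σ)
    (fun f hf => Equiv.ofBijective f
      (Finite.injective_iff_bijective.mp (Finset.mem_filter.mp hf).2)) ?_ ?_ ?_ ?_ ?_
  · intro σ _
    simp [Equiv.injective]
  · intro f hf
    exact Finset.mem_univ _
  · intro σ _
    exact Equiv.ext fun x => rfl
  · intro f hf
    rfl
  · intro σ _
    exact rename_monomial_perm N σ d

end Stmt3Aux

/-- The Poisson algebra `ℂ[x₁,…,x_N,y₁,…,y_N]^{S_N}` of diagonal `S_N`-invariants is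
generated, as a Poisson algebra, by the subalgebras `ℂ[x]^{S_N}` and `ℂ[y]^{S_N}`:
every subalgebra `S` closed under the Poisson bracket and containing both of them
contains all diagonal invariants. -/
theorem stmt3 (N : ℕ) (S : Subalgebra ℂ (MvPolynomial (Fin N ⊕ Fin N) ℂ))
    (hbr : ∀ f ∈ S, ∀ g ∈ S, poissonBracket N f g ∈ S)
    (hx : (symmetricSubalgebra (Fin N) ℂ).map (rename Sum.inl) ≤ S)
    (hy : (symmetricSubalgebra (Fin N) ℂ).map (rename Sum.inr) ≤ S) :
    ∀ f : MvPolynomial (Fin N ⊕ Fin N) ℂ,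
      (∀ σ : Equiv.Perm (Fin N), rename (Sum.map σ σ) f = f) → f ∈ S := by
  intro f hf
  have hN : ((N.factorial : ℂ)) ≠ 0 := Nat.cast_ne_zero.mpr (Nat.factorial_ne_zero N)
  have hsum : ∑ σ : Equiv.Perm (Fin N), rename (Sum.map σ σ) f = (N.factorial : ℂ) • f := by
    rw [Finset.sum_congr rfl fun σ _ => hf σ, Finset.sum_const, Finset.card_univ,
      Fintype.card_perm, Fintype.card_fin, ← Nat.cast_smul_eq_nsmul ℂ]
  have hmem : ∑ σ : Equiv.Perm (Fin N), rename (Sum.map σ σ) f ∈ S := by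
    have key : ∑ σ : Equiv.Perm (Fin N), rename (Sum.map σ σ) f
        = ∑ d ∈ f.support, C (coeff d f)
            * Stmt3Aux.q N N (fun i => (d (Sum.inl i), d (Sum.inr i))) := by
      conv_lhs => rw [f.as_sum]
      simp only [map_sum]
      rw [Finset.sum_comm]
      refine Finset.sum_congr rfl fun d _ => ?_
      have : (monomial d (coeff d f)) = C (coeff d f) * monomial d (1:ℂ) := by
        rw [C_mul_monomial, mul_one]
      simp only [this, map_mul, rename_C]
      rw [← Finset.mul_sum, Stmt3Aux.sum_perm_eq_q]
    rw [key]
    refine S.sum_mem fun d _ => S.mul_mem ?_ (Stmt3Aux.q_mem N S hbr hx hy N _)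
    have : (C (coeff d f) : MvPolynomial (Fin N ⊕ Fin N) ℂ)
        = algebraMap ℂ _ (coeff d f) := rfl
    rw [this]
    exact S.algebraMap_mem _
  have hf2 : f = (N.factorial : ℂ)⁻¹ • ∑ σ : Equiv.Perm (Fin N), rename (Sum.map σ σ) f := by
    rw [hsum, inv_smul_smul₀ hN]
  rw [hf2]
  exact S.smul_mem hmem _
end

section
/- In the Poisson algebra C[x_{ij}, y_{ij}, γ_i, β_i] with comoment map μ*(E_{kl}) = Σ_p (x_{kp}y_{pl} − x_{pl}y_{kp}) + γ_k β_l, the power sums Tr(X^m) and Tr(Y^m) are invariants: {μ*(E_{kl}), Tr(X^m)} = 0 and {μ*(E_{kl}), Tr(Y^m)} = 0 for all k, l and all m ≥ 0. -/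
open MvPolynomial Matrix

abbrev V4 (N : ℕ) := (Fin N × Fin N) ⊕ (Fin N × Fin N) ⊕ Fin N ⊕ Fin N

noncomputable def xv (N : ℕ) (i j : Fin N) : MvPolynomial (V4 N) ℂ :=
  X (Sum.inl (i, j))
noncomputable def yv (N : ℕ) (i j : Fin N) : MvPolynomial (V4 N) ℂ :=
  X (Sum.inr (Sum.inl (i, j)))
noncomputable def gv (N : ℕ) (i : Fin N) : MvPolynomial (V4 N) ℂ :=
  X (Sum.inr (Sum.inr (Sum.inl i)))
noncomputable def bv (N : ℕ) (i : Fin N) : MvPolynomial (V4 N) ℂ :=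
  X (Sum.inr (Sum.inr (Sum.inr i)))

/-- The Poisson bracket with `{y_{ij}, x_{kl}} = δ_{il}δ_{jk}`, `{β_i, γ_j} = δ_{ij}`. -/
noncomputable def pb4 (N : ℕ) (f g : MvPolynomial (V4 N) ℂ) : MvPolynomial (V4 N) ℂ :=
  (∑ i : Fin N, ∑ j : Fin N,
    (pderiv (Sum.inr (Sum.inl (i, j))) f * pderiv (Sum.inl (j, i)) g -
      pderiv (Sum.inl (j, i)) f * pderiv (Sum.inr (Sum.inl (i, j))) g)) +
  ∑ i : Fin N,
    (pderiv (Sum.inr (Sum.inr (Sum.inr i))) f * pderiv (Sum.inr (Sum.inr (Sum.inl i))) g -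
      pderiv (Sum.inr (Sum.inr (Sum.inl i))) f * pderiv (Sum.inr (Sum.inr (Sum.inr i))) g)

noncomputable def mu (N : ℕ) (i j : Fin N) : MvPolynomial (V4 N) ℂ :=
  (∑ p : Fin N, (xv N i p * yv N p j - xv N p j * yv N i p)) + gv N i * bv N j

/-- The generic matrices `X = (x_{ij})`, `Y = (y_{ij})`. -/
noncomputable def XM (N : ℕ) : Matrix (Fin N) (Fin N) (MvPolynomial (V4 N) ℂ) :=
  Matrix.of fun i j => xv N i j
noncomputable def YM (N : ℕ) : Matrix (Fin N) (Fin N) (MvPolynomial (V4 N) ℂ) :=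
  Matrix.of fun i j => yv N i j

section Aux

open Finset

variable {σ : Type*} [DecidableEq σ]

lemma gen_pderiv_pow_ne {N : ℕ} (M : Matrix (Fin N) (Fin N) (MvPolynomial σ ℂ))
    (e : Fin N × Fin N → σ) (hM : ∀ a b, M a b = X (e (a, b)))
    (w : σ) (hw : ∀ p, w ≠ e p) (m : ℕ) (a b : Fin N) :
    pderiv w ((M ^ m) a b) = 0 := by
  induction m generalizing a b with
  | zero => simp [Matrix.one_apply]; split <;> simp
  | succ m ih =>
    rw [pow_succ, Matrix.mul_apply, map_sum]
    refine Finset.sum_eq_zero fun c _ => ?_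
    rw [pderiv_mul, ih, hM, pderiv_X, Pi.single_eq_of_ne (Ne.symm (hw _))]
    ring

lemma gen_pderiv_trace_ne {N : ℕ} (M : Matrix (Fin N) (Fin N) (MvPolynomial σ ℂ))
    (e : Fin N × Fin N → σ) (hM : ∀ a b, M a b = X (e (a, b)))
    (w : σ) (hw : ∀ p, w ≠ e p) (m : ℕ) :
    pderiv w ((M ^ m).trace) = 0 := by
  rw [Matrix.trace, map_sum]
  exact Finset.sum_eq_zero fun a _ => gen_pderiv_pow_ne M e hM w hw m a a

lemma gen_pderiv_pow {N : ℕ} (M : Matrix (Fin N) (Fin N) (MvPolynomial σ ℂ))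
    (e : Fin N × Fin N → σ) (he : Function.Injective e)
    (hM : ∀ a b, M a b = X (e (a, b))) (j i : Fin N) (m : ℕ) (a b : Fin N) :
    pderiv (e (j, i)) ((M ^ m) a b) =
      ∑ r ∈ Finset.range m, (M ^ r) a j * (M ^ (m - 1 - r)) i b := by
  induction m generalizing a b with
  | zero => simp [Matrix.one_apply]; split <;> simp
  | succ m ih =>
    rw [pow_succ, Matrix.mul_apply, map_sum]
    have key : ∀ c : Fin N, pderiv (e (j, i)) ((M ^ m) a c * M c b) =
        (∑ r ∈ Finset.range m, (M ^ r) a j * (M ^ (m - 1 - r)) i c) * M c b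
          + (M ^ m) a c * if c = j ∧ b = i then 1 else 0 := by
      intro c
      rw [pderiv_mul, ih, hM c b, pderiv_X]
      congr 1
      by_cases h : (c, b) = (j, i)
      · rw [Prod.ext_iff] at h
        obtain ⟨h1, h2⟩ := h
        subst h1; subst h2; simp
      · rw [Pi.single_eq_of_ne (fun hc => h (he hc)), if_neg]
        rintro ⟨h1, h2⟩; exact h (by simp [h1, h2])
    simp_rw [key]
    rw [Finset.sum_add_distrib, Finset.sum_range_succ]
    congr 1
    · simp_rw [Finset.sum_mul]
      rw [Finset.sum_comm]
      refine Finset.sum_congr rfl fun r hr => ?_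
      rw [mem_range] at hr
      simp_rw [mul_assoc, ← Finset.mul_sum]
      congr 1
      rw [← Matrix.mul_apply, ← pow_succ]
      have hh : m - 1 - r + 1 = m + 1 - 1 - r := by omega
      rw [hh]
    · have : ∀ c : Fin N, (M ^ m) a c * (if c = j ∧ b = i then (1:MvPolynomial σ ℂ) else 0)
          = if b = i then (if c = j then (M ^ m) a c else 0) else 0 := by
        intro c; by_cases h1 : b = i <;> by_cases h2 : c = j <;> simp [h1, h2]
      simp_rw [this]
      by_cases h1 : b = i
      · simp [h1, Finset.sum_ite_eq', Matrix.one_apply]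
      · have h2 : ¬ i = b := fun h => h1 h.symm
        simp [h1, h2, Matrix.one_apply]

lemma gen_pderiv_trace {N : ℕ} (M : Matrix (Fin N) (Fin N) (MvPolynomial σ ℂ))
    (e : Fin N × Fin N → σ) (he : Function.Injective e)
    (hM : ∀ a b, M a b = X (e (a, b))) (j i : Fin N) (m : ℕ) :
    pderiv (e (j, i)) ((M ^ m).trace) = m • (M ^ (m - 1)) i j := by
  rw [Matrix.trace, map_sum]
  simp_rw [Matrix.diag_apply, gen_pderiv_pow M e he hM j i m]
  rw [Finset.sum_comm]
  have : ∀ r ∈ Finset.range m, ∑ a : Fin N, (M ^ r) a j * (M ^ (m - 1 - r)) i a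
      = (M ^ (m - 1)) i j := by
    intro r hr
    rw [mem_range] at hr
    have hc : ∀ a : Fin N, (M ^ r) a j * (M ^ (m - 1 - r)) i a
        = (M ^ (m - 1 - r)) i a * (M ^ r) a j := fun a => mul_comm _ _
    simp_rw [hc]
    rw [← Matrix.mul_apply, ← pow_add]
    have hh : m - 1 - r + r = m - 1 := by omega
    rw [hh]
  rw [Finset.sum_congr rfl this, Finset.sum_const, Finset.card_range]

lemma pd_X (v w : σ) :
    pderiv v (X w : MvPolynomial σ ℂ) = if w = v then 1 else 0 := by
  rw [pderiv_X]
  rcases eq_or_ne w v with h | h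
  · subst h; simp
  · rw [Pi.single_eq_of_ne h, if_neg h]

lemma pderiv_mu_y (N : ℕ) (k l i j : Fin N) :
    pderiv (Sum.inr (Sum.inl (i, j))) (mu N k l) =
      (if l = j then xv N k i else 0) - (if k = i then xv N j l else 0) := by
  simp only [mu, map_add, map_sum, map_sub, pderiv_mul, xv, yv, gv, bv, pd_X]
  simp only [Sum.inl.injEq, Sum.inr.injEq, Prod.mk.injEq, reduceCtorEq, if_false, if_true,
    mul_zero, zero_mul, mul_one, one_mul, add_zero, zero_add, ite_and, mul_ite]
  rw [Finset.sum_sub_distrib]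
  congr 1
  · simp [Finset.sum_ite_eq, Finset.sum_ite_eq']
  · simp [Finset.sum_ite_eq, Finset.sum_ite_eq']

lemma pderiv_mu_x (N : ℕ) (k l j i : Fin N) :
    pderiv (Sum.inl (j, i)) (mu N k l) =
      (if k = j then yv N i l else 0) - (if l = i then yv N k j else 0) := by
  simp only [mu, map_add, map_sum, map_sub, pderiv_mul, xv, yv, gv, bv, pd_X]
  simp only [Sum.inl.injEq, Sum.inr.injEq, Prod.mk.injEq, reduceCtorEq, if_false, if_true,
    mul_zero, zero_mul, mul_one, one_mul, add_zero, zero_add, ite_and, mul_ite]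
  rw [Finset.sum_sub_distrib]
  congr 1
  · simp [Finset.sum_ite_eq, Finset.sum_ite_eq']
  · simp [Finset.sum_ite_eq, Finset.sum_ite_eq']

lemma key1 {R : Type*} [CommRing R] {N : ℕ} (k l : Fin N) (u T : Fin N → Fin N → R)
    (h : ∑ i : Fin N, u k i * T i l = ∑ j : Fin N, u j l * T k j) :
    ∑ i : Fin N, ∑ j : Fin N,
      ((if l = j then u k i else 0) - (if k = i then u j l else 0)) * T i j = 0 := by
  have e1 : ∀ i j : Fin N, ((if l = j then u k i else 0) - (if k = i then u j l else 0)) * T i j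
      = (if l = j then u k i * T i j else 0) - (if k = i then u j l * T i j else 0) := by
    intro i j; split_ifs <;> ring
  simp_rw [e1, Finset.sum_sub_distrib]
  rw [sub_eq_zero]
  have h1 : ∀ i : Fin N, ∑ j : Fin N, (if l = j then u k i * T i j else 0) = u k i * T i l := by
    intro i; simp [Finset.sum_ite_eq]
  have h2 : ∀ i : Fin N, ∑ j : Fin N, (if k = i then u j l * T i j else 0) =
      if k = i then ∑ j : Fin N, u j l * T i j else 0 := by
    intro i; split_ifs <;> simp
  simp_rw [h1, h2]
  rw [Finset.sum_ite_eq]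
  simpa using h

lemma key2 {R : Type*} [CommRing R] {N : ℕ} (k l : Fin N) (u T : Fin N → Fin N → R)
    (h : ∑ i : Fin N, u i l * T i k = ∑ j : Fin N, u k j * T l j) :
    ∑ i : Fin N, ∑ j : Fin N,
      ((if k = j then u i l else 0) - (if l = i then u k j else 0)) * T i j = 0 := by
  have e1 : ∀ i j : Fin N, ((if k = j then u i l else 0) - (if l = i then u k j else 0)) * T i j
      = (if k = j then u i l * T i j else 0) - (if l = i then u k j * T i j else 0) := by
    intro i j; split_ifs <;> ring
  simp_rw [e1, Finset.sum_sub_distrib]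
  rw [sub_eq_zero]
  have h1 : ∀ i : Fin N, ∑ j : Fin N, (if k = j then u i l * T i j else 0) = u i l * T i k := by
    intro i; simp [Finset.sum_ite_eq]
  have h2 : ∀ i : Fin N, ∑ j : Fin N, (if l = i then u k j * T i j else 0) =
      if l = i then ∑ j : Fin N, u k j * T i j else 0 := by
    intro i; split_ifs <;> simp
  simp_rw [h1, h2]
  rw [Finset.sum_ite_eq]
  simpa using h

end Aux

/-- The power sums `Tr(X^m)` and `Tr(Y^m)` are invariants:
`{μ*(E_{kl}), Tr(X^m)} = 0` and `{μ*(E_{kl}), Tr(Y^m)} = 0` for all `k, l, m`. -/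
theorem stmt6 (N : ℕ) (k l : Fin N) (m : ℕ) :
    pb4 N (mu N k l) ((XM N ^ m).trace) = 0 ∧
    pb4 N (mu N k l) ((YM N ^ m).trace) = 0 := by
  have heX : ∀ a b : Fin N, XM N a b = X (Sum.inl (a, b)) := fun a b => rfl
  have heY : ∀ a b : Fin N, YM N a b = X ((fun p : Fin N × Fin N => Sum.inr (Sum.inl p) : _ → V4 N) (a, b)) := fun a b => rfl
  have hiX : Function.Injective (fun p : Fin N × Fin N => (Sum.inl p : V4 N)) :=
    fun a b h => by simpa using h
  have hiY : Function.Injective (fun p : Fin N × Fin N => (Sum.inr (Sum.inl p) : V4 N)) :=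
    fun a b h => by simpa using h
  have hdX : ∀ j i : Fin N, pderiv (Sum.inl (j, i) : V4 N) ((XM N ^ m).trace)
      = m • (XM N ^ (m - 1)) i j := fun j i =>
    gen_pderiv_trace (XM N) (fun p => Sum.inl p) hiX heX j i m
  have hdY : ∀ i j : Fin N, pderiv (Sum.inr (Sum.inl (i, j)) : V4 N) ((YM N ^ m).trace)
      = m • (YM N ^ (m - 1)) j i := fun i j =>
    gen_pderiv_trace (YM N) (fun p => Sum.inr (Sum.inl p)) hiY heY i j m
  constructor
  · -- X part
    rw [pb4]
    have hz : ∀ w, (∀ p : Fin N × Fin N, w ≠ Sum.inl p) →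
        pderiv w ((XM N ^ m).trace) = 0 := fun w hw =>
      gen_pderiv_trace_ne (XM N) (fun p => Sum.inl p) heX w hw m
    have hB : ∀ i : Fin N,
        pderiv (Sum.inr (Sum.inr (Sum.inr i))) (mu N k l) *
          pderiv (Sum.inr (Sum.inr (Sum.inl i))) ((XM N ^ m).trace) -
        pderiv (Sum.inr (Sum.inr (Sum.inl i))) (mu N k l) *
          pderiv (Sum.inr (Sum.inr (Sum.inr i))) ((XM N ^ m).trace) = 0 := by
      intro i
      rw [hz _ (by simp), hz _ (by simp)]
      ring
    rw [Finset.sum_congr rfl (fun i _ => hB i), Finset.sum_const, smul_zero, add_zero]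
    have hA : ∀ i j : Fin N,
        pderiv (Sum.inr (Sum.inl (i, j))) (mu N k l) * pderiv (Sum.inl (j, i)) ((XM N ^ m).trace) -
        pderiv (Sum.inl (j, i)) (mu N k l) * pderiv (Sum.inr (Sum.inl (i, j))) ((XM N ^ m).trace)
        = ((if l = j then xv N k i else 0) - (if k = i then xv N j l else 0)) *
            (m • (XM N ^ (m - 1)) i j) := by
      intro i j
      rw [hdX j i, hz (Sum.inr (Sum.inl (i, j))) (by simp), pderiv_mu_y]
      ring
    simp_rw [hA]
    refine key1 k l (fun a b => xv N a b) (fun a b => m • (XM N ^ (m - 1)) a b) ?_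
    simp_rw [mul_smul_comm, ← Finset.smul_sum]
    congr 1
    have e1 : ∑ i : Fin N, xv N k i * (XM N ^ (m - 1)) i l = (XM N ^ (m - 1 + 1)) k l := by
      rw [pow_succ']
      rw [Matrix.mul_apply]
      rfl
    have e2 : ∑ j : Fin N, xv N j l * (XM N ^ (m - 1)) k j = (XM N ^ (m - 1 + 1)) k l := by
      rw [pow_succ, Matrix.mul_apply]
      exact Finset.sum_congr rfl fun j _ => mul_comm _ _
    rw [e1, e2]
  · -- Y part
    rw [pb4]
    have hz : ∀ w, (∀ p : Fin N × Fin N, w ≠ Sum.inr (Sum.inl p)) →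
        pderiv w ((YM N ^ m).trace) = 0 := fun w hw =>
      gen_pderiv_trace_ne (YM N) (fun p => Sum.inr (Sum.inl p)) heY w hw m
    have hB : ∀ i : Fin N,
        pderiv (Sum.inr (Sum.inr (Sum.inr i))) (mu N k l) *
          pderiv (Sum.inr (Sum.inr (Sum.inl i))) ((YM N ^ m).trace) -
        pderiv (Sum.inr (Sum.inr (Sum.inl i))) (mu N k l) *
          pderiv (Sum.inr (Sum.inr (Sum.inr i))) ((YM N ^ m).trace) = 0 := by
      intro i
      rw [hz _ (by simp), hz _ (by simp)]
      ring
    rw [Finset.sum_congr rfl (fun i _ => hB i), Finset.sum_const, smul_zero, add_zero]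
    have hA : ∀ i j : Fin N,
        pderiv (Sum.inr (Sum.inl (i, j))) (mu N k l) * pderiv (Sum.inl (j, i)) ((YM N ^ m).trace) -
        pderiv (Sum.inl (j, i)) (mu N k l) * pderiv (Sum.inr (Sum.inl (i, j))) ((YM N ^ m).trace)
        = -(((if k = j then yv N i l else 0) - (if l = i then yv N k j else 0)) *
            (m • (YM N ^ (m - 1)) j i)) := by
      intro i j
      rw [hdY i j, hz (Sum.inl (j, i)) (by simp), pderiv_mu_x]
      ring
    simp_rw [hA]
    simp only [Finset.sum_neg_distrib, neg_eq_zero]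
    refine key2 k l (fun a b => yv N a b) (fun a b => m • (YM N ^ (m - 1)) b a) ?_
    simp_rw [mul_smul_comm, ← Finset.smul_sum]
    congr 1
    have e1 : ∑ i : Fin N, yv N i l * (YM N ^ (m - 1)) k i = (YM N ^ (m - 1 + 1)) k l := by
      rw [pow_succ, Matrix.mul_apply]
      exact Finset.sum_congr rfl fun i _ => mul_comm _ _
    have e2 : ∑ j : Fin N, yv N k j * (YM N ^ (m - 1)) j l = (YM N ^ (m - 1 + 1)) k l := by
      rw [pow_succ', Matrix.mul_apply]
      rfl
    rw [e1, e2]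
end

section
/- The identity of formal q-series η(q)^3 · Σ_{n≥1} σ_1(n) q^n = Σ_{n≥0} (−1)^n ((n+3)(n+2)(n+1)/6 + (n+2)(n+1)n/6) q^{(3+2n)^2/8 − 1/8} holds, where η(q) = q^{1/24} Π_{m≥1}(1 − q^m); equivalently, sch_{W_{S_3}}(q) = (1 − E_2(q))/24, where sch_{W_{S_3}}(q) = (1/η(q)^3) Σ_{n≥0} (−1)^n (C(3+n,3) + C(2+n,3)) q^{(3+2n)^2/8}. -/
open PowerSeries

/-- `∑_{n≥1} σ₁(n) qⁿ` as a formal power series. -/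
noncomputable def S12 : PowerSeries ℤ :=
  PowerSeries.mk fun n => if n = 0 then 0 else (∑ d ∈ n.divisors, (d : ℤ))

/-- The right-hand side `∑_{n≥0} (−1)^n (C(n+3,3) + C(n+2,3)) q^{(3+2n)²/8 − 1/8}`.
Note `(3+2n)²/8 − 1/8 = 1 + n(n+3)/2` and
`C(n+3,3) = (n+3)(n+2)(n+1)/6`, `C(n+2,3) = (n+2)(n+1)n/6`. -/
noncomputable def T12 : PowerSeries ℤ :=
  PowerSeries.mk fun k =>
    ∑ n ∈ Finset.range (k + 1),
      if 1 + n * (n + 3) / 2 = k then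
        (-1 : ℤ) ^ n * (((n + 3).choose 3 : ℤ) + ((n + 2).choose 3 : ℤ))
      else 0

open Finset

section JacobiAux

def tri : ℕ → ℕ
  | 0 => 0
  | n + 1 => tri n + n + 1

lemma tri_succ (n : ℕ) : tri (n+1) = tri n + n + 1 := rfl

lemma tri_lt_tri_succ (n : ℕ) : tri n < tri (n+1) := by simp [tri]

lemma tri_strictMono : StrictMono tri := strictMono_nat_of_lt_succ tri_lt_tri_succ

lemma le_tri (n : ℕ) : n ≤ tri n := by
  induction n with
  | zero => simp [tri]
  | succ n ih => simp only [tri]; omega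

/-- the exponent (j-n)(j-n+1)/2 for signed index -/
def EE (n j : ℕ) : ℕ := if n ≤ j then tri (j - n) else tri (n - j - 1)

noncomputable section

/-- partial product ∏_{m=a+1}^{b} (1 - X^m) -/
def qg (a b : ℕ) : PowerSeries ℤ := ∏ m ∈ Finset.Ioc a b, (1 - (X : PowerSeries ℤ) ^ m)

lemma qg_mul {a b c : ℕ} (hab : a ≤ b) (hbc : b ≤ c) : qg a b * qg b c = qg a c :=
  Finset.prod_Ioc_consecutive _ hab hbc

lemma qg_self (a : ℕ) : qg a a = 1 := by simp [qg]

lemma qg_succ (a : ℕ) : qg a (a+1) = 1 - X ^ (a+1) := by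
  simp [qg, Nat.Ioc_succ_singleton]

lemma constantCoeff_qg (a b : ℕ) : constantCoeff (qg a b) = 1 := by
  rw [qg, map_prod]
  apply Finset.prod_eq_one
  intro m hm
  have hm1 : m ≠ 0 := by have := (Finset.mem_Ioc.mp hm).1; omega
  rw [map_sub, map_one, map_pow, constantCoeff_X, zero_pow hm1, sub_zero]

/-- inverse of qg 0 n -/
def qfi (n : ℕ) : PowerSeries ℤ := invOfUnit (qg 0 n) 1

lemma qg_mul_qfi (n : ℕ) : qg 0 n * qfi n = 1 :=
  mul_invOfUnit _ 1 (by simp [constantCoeff_qg])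

lemma isUnit_qg (n : ℕ) : IsUnit (qg 0 n) := IsUnit.of_mul_eq_one _ (qg_mul_qfi n)

lemma qg_qfi (b c : ℕ) (h : b ≤ c) : qg 0 c * qfi b = qg b c := by
  have h1 : qg 0 b * qg b c = qg 0 c := qg_mul (Nat.zero_le _) h
  calc qg 0 c * qfi b = qg b c * (qg 0 b * qfi b) := by rw [← h1]; ring
    _ = qg b c := by rw [qg_mul_qfi, mul_one]

/-- Gaussian binomial as a power series -/
def gb (N r : ℕ) : PowerSeries ℤ := if r ≤ N then qg 0 N * qfi r * qfi (N - r) else 0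

lemma gb_of_gt {N r : ℕ} (h : N < r) : gb N r = 0 := by simp [gb, Nat.not_le.mpr h]

lemma gb_zero_right (N : ℕ) : gb N 0 = 1 := by
  have : qfi 0 = 1 := by
    have := qg_mul_qfi 0
    simpa [qg_self] using this
  simp [gb, this, Nat.sub_zero, qg_mul_qfi]

lemma gb_self (N : ℕ) : gb N N = 1 := by
  have h0 : qfi 0 = 1 := by
    have := qg_mul_qfi 0
    simpa [qg_self] using this
  simp [gb, h0, Nat.sub_self, mul_comm, qg_mul_qfi, mul_assoc]
  rw [mul_comm, qg_mul_qfi]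

lemma gb_symm (N r : ℕ) (h : r ≤ N) : gb N r = gb N (N - r) := by
  simp [gb, h, Nat.sub_le, Nat.sub_sub_self h]
  ring

/-- (1-X) * gb N 1 = 1 - X^N -/
lemma gb_one (N : ℕ) (hN : 1 ≤ N) : qg 0 1 * gb N 1 = 1 - X ^ N := by
  rw [gb, if_pos hN]
  have : qg 0 1 * (qg 0 N * qfi 1 * qfi (N-1)) = (qg 0 1 * qfi 1) * (qg 0 N * qfi (N-1)) := by ring
  rw [this, qg_mul_qfi, one_mul, qg_qfi _ _ (by omega)]
  have h2 : N - 1 + 1 = N := by omega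
  rw [← h2, Nat.add_sub_cancel, qg_succ]


lemma gb_clear (u v : ℕ) : qg 0 u * qg 0 v * gb (u+v) u = qg 0 (u+v) := by
  rw [gb, if_pos (Nat.le_add_right u v), Nat.add_sub_cancel_left]
  calc qg 0 u * qg 0 v * (qg 0 (u+v) * qfi u * qfi v)
      = (qg 0 u * qfi u) * (qg 0 v * qfi v) * qg 0 (u+v) := by ring
    _ = qg 0 (u+v) := by rw [qg_mul_qfi, qg_mul_qfi, one_mul, one_mul]

lemma qg_two (a : ℕ) : qg a (a+2) = (1 - X^(a+1)) * (1 - X^(a+2)) := by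
  rw [← qg_mul (Nat.le_succ a) (by omega : a+1 ≤ a+2), qg_succ]
  congr 1
  have : a + 2 = (a+1) + 1 := rfl
  rw [this, qg_succ]

/-- the core recursion identity for Gaussian binomials, main case -/
lemma gb_rec (n j q : ℕ) (h2n : 2*n = j + q + 2) :
    gb (2*n+2) (j+2) = (1 + X^(2*n+1)) * gb (2*n) (j+1)
      + X^(j+2) * gb (2*n) (j+2) + X^(q+2) * gb (2*n) j := by
  have hU : IsUnit (qg 0 (j+2) * qg 0 (q+2)) := (isUnit_qg _).mul (isUnit_qg _)
  apply hU.mul_left_cancel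
  have e1 : qg 0 (j+2) * qg 0 (q+2) * gb (2*n+2) (j+2) = qg 0 (2*n+2) := by
    have := gb_clear (j+2) (q+2)
    rw [show (j+2)+(q+2) = 2*n+2 by omega] at this
    exact this
  have e2 : qg 0 (j+2) * qg 0 (q+2) * gb (2*n) (j+1)
      = (1 - X^(j+2)) * (1 - X^(q+2)) * qg 0 (2*n) := by
    have hj : qg 0 (j+2) = qg 0 (j+1) * (1 - X^(j+2)) := by
      rw [← qg_mul (by omega : 0 ≤ j+1) (Nat.le_succ _), qg_succ]
    have hq : qg 0 (q+2) = qg 0 (q+1) * (1 - X^(q+2)) := by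
      rw [← qg_mul (by omega : 0 ≤ q+1) (Nat.le_succ _), qg_succ]
    rw [hj, hq]
    have := gb_clear (j+1) (q+1)
    rw [show (j+1)+(q+1) = 2*n by omega] at this
    calc qg 0 (j+1) * (1 - X^(j+2)) * (qg 0 (q+1) * (1 - X^(q+2))) * gb (2*n) (j+1)
        = (1 - X^(j+2)) * (1 - X^(q+2)) * (qg 0 (j+1) * qg 0 (q+1) * gb (2*n) (j+1)) := by ring
      _ = (1 - X^(j+2)) * (1 - X^(q+2)) * qg 0 (2*n) := by rw [this]
  have e3 : qg 0 (j+2) * qg 0 (q+2) * gb (2*n) (j+2)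
      = (1 - X^(q+1)) * (1 - X^(q+2)) * qg 0 (2*n) := by
    have hq : qg 0 (q+2) = qg 0 q * ((1 - X^(q+1)) * (1 - X^(q+2))) := by
      rw [← qg_mul (Nat.zero_le q) (by omega : q ≤ q+2), qg_two]
    rw [hq]
    have := gb_clear (j+2) q
    rw [show (j+2)+q = 2*n by omega] at this
    calc qg 0 (j+2) * (qg 0 q * ((1 - X^(q+1)) * (1 - X^(q+2)))) * gb (2*n) (j+2)
        = (1 - X^(q+1)) * (1 - X^(q+2)) * (qg 0 (j+2) * qg 0 q * gb (2*n) (j+2)) := by ring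
      _ = (1 - X^(q+1)) * (1 - X^(q+2)) * qg 0 (2*n) := by rw [this]
  have e4 : qg 0 (j+2) * qg 0 (q+2) * gb (2*n) j
      = (1 - X^(j+1)) * (1 - X^(j+2)) * qg 0 (2*n) := by
    have hj : qg 0 (j+2) = qg 0 j * ((1 - X^(j+1)) * (1 - X^(j+2))) := by
      rw [← qg_mul (Nat.zero_le j) (by omega : j ≤ j+2), qg_two]
    rw [hj]
    have := gb_clear j (q+2)
    rw [show j+(q+2) = 2*n by omega] at this
    calc qg 0 j * ((1 - X^(j+1)) * (1 - X^(j+2))) * qg 0 (q+2) * gb (2*n) j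
        = (1 - X^(j+1)) * (1 - X^(j+2)) * (qg 0 j * qg 0 (q+2) * gb (2*n) j) := by ring
      _ = (1 - X^(j+1)) * (1 - X^(j+2)) * qg 0 (2*n) := by rw [this]
  have e5 : qg 0 (2*n+2) = qg 0 (2*n) * ((1 - X^(2*n+1)) * (1 - X^(2*n+2))) := by
    rw [← qg_mul (Nat.zero_le (2*n)) (by omega : 2*n ≤ 2*n+2), qg_two]
  rw [mul_add, mul_add, e1, e5]
  rw [show qg 0 (j+2) * qg 0 (q+2) * ((1 + X^(2*n+1)) * gb (2*n) (j+1))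
      = (1 + X^(2*n+1)) * (qg 0 (j+2) * qg 0 (q+2) * gb (2*n) (j+1)) by ring, e2]
  rw [show qg 0 (j+2) * qg 0 (q+2) * (X^(j+2) * gb (2*n) (j+2))
      = X^(j+2) * (qg 0 (j+2) * qg 0 (q+2) * gb (2*n) (j+2)) by ring, e3]
  rw [show qg 0 (j+2) * qg 0 (q+2) * (X^(q+2) * gb (2*n) j)
      = X^(q+2) * (qg 0 (j+2) * qg 0 (q+2) * gb (2*n) j) by ring, e4]
  have hAB : (X : PowerSeries ℤ)^(2*n+1) = X^(j+q+3) := by congr 1; omega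
  have hAB2 : (X : PowerSeries ℤ)^(2*n+2) = X^(j+q+4) := by congr 1; omega
  rw [hAB, hAB2]
  ring


lemma gb_one_rec (n : ℕ) (hn : 1 ≤ n) :
    gb (2*n+2) 1 = 1 + X^(2*n+1) + X * gb (2*n) 1 := by
  apply (isUnit_qg 1).mul_left_cancel
  rw [gb_one _ (by omega)]
  have h01 : qg 0 1 = 1 - X^1 := by have := qg_succ 0; simpa using this
  rw [mul_add, mul_add,
    show qg 0 1 * (X * gb (2*n) 1) = X * (qg 0 1 * gb (2*n) 1) by ring,
    gb_one _ (by omega : 1 ≤ 2*n), h01]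
  have p1 : (X : PowerSeries ℤ)^(2*n+1) = X^(2*n)*X := by rw [← pow_succ]
  have p2 : (X : PowerSeries ℤ)^(2*n+2) = X^(2*n+1)*X := by rw [← pow_succ]
  rw [p2, p1]
  ring

lemma seven {k l : ℕ} (h : (k+l) % 2 = 0) : (-1 : PowerSeries ℤ)^k = (-1 : PowerSeries ℤ)^l := by
  rw [neg_one_pow_eq_pow_mod_two, neg_one_pow_eq_pow_mod_two (n := l)]
  congr 1
  omega

lemma sodd {k l : ℕ} (h : (k+l) % 2 = 1) : (-1 : PowerSeries ℤ)^k = -(-1 : PowerSeries ℤ)^l := by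
  have h2 : ((-1 : PowerSeries ℤ))^l * ((-1 : PowerSeries ℤ))^l = 1 := by
    rw [← pow_add, neg_one_pow_eq_pow_mod_two, (by omega : (l+l) % 2 = 0), pow_zero]
  have h1 : ((-1 : PowerSeries ℤ))^(k+l) = -1 := by
    rw [neg_one_pow_eq_pow_mod_two, h, pow_one]
  calc (-1 : PowerSeries ℤ)^k = (-1 : PowerSeries ℤ)^k * ((-1 : PowerSeries ℤ)^l * (-1 : PowerSeries ℤ)^l) := by
        rw [h2, mul_one]
    _ = ((-1 : PowerSeries ℤ))^(k+l) * (-1 : PowerSeries ℤ)^l := by rw [pow_add]; ring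
    _ = -(-1 : PowerSeries ℤ)^l := by rw [h1]; ring

lemma EE_shift (n j : ℕ) : EE (n+1) (j+1) = EE n j := by
  unfold EE
  rcases le_or_gt n j with h | h
  · rw [if_pos (by omega), if_pos h]
    congr 1
    omega
  · rw [if_neg (by omega), if_neg (by omega)]
    congr 1
    omega

lemma EE_right (n j : ℕ) : n + EE n j = j + EE (n+1) j := by
  unfold EE
  rcases le_or_gt (n+1) j with h | h
  · rw [if_pos (by omega), if_pos h, (by omega : j - n = (j - (n+1)) + 1), tri_succ]
    omega
  · rcases le_or_gt n j with h' | h'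
    · -- j = n
      rw [if_pos h', if_neg (by omega), (by omega : j - n = 0), (by omega : n + 1 - j - 1 = 0)]
      omega
    · rw [if_neg (by omega), if_neg (by omega), (by omega : n + 1 - j - 1 = (n - j - 1) + 1), tri_succ]
      omega

lemma EE_left (n j q : ℕ) (hq : 2*n = j + q + 2) :
    (n+1) + EE n j = (q+2) + EE n (j+1) := by
  unfold EE
  rcases le_or_gt n j with h | h
  · rw [if_pos h, if_pos (by omega), (by omega : j + 1 - n = (j - n) + 1), tri_succ]
    omega
  · rcases le_or_gt n (j+1) with h' | h'
    · -- n = j+1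
      rw [if_neg (by omega), if_pos h', (by omega : n - j - 1 = 0), (by omega : j + 1 - n = 0)]
      omega
    · rw [if_neg (by omega), if_neg (by omega), (by omega : n - j - 1 = (n - (j+1) - 1) + 1), tri_succ]
      omega

/-- signed coefficient of the finite Jacobi triple product -/
noncomputable def cc (n j : ℕ) : PowerSeries ℤ :=
  (-1 : PowerSeries ℤ)^(j+n) * (X^(EE n j) * gb (2*n) j)

lemma cc_of_gt {n j : ℕ} (h : 2*n < j) : cc n j = 0 := by
  rw [cc, gb_of_gt h]; ring

/-- THE recursion, shifted form, valid for all j, n ≥ 1 -/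
lemma cc_rec (n j : ℕ) (hn : 1 ≤ n) :
    cc (n+1) (j+2) = (1 + X^(2*n+1)) * cc n (j+1) - X^n * cc n (j+2) - X^(n+1) * cc n j := by
  by_cases h1 : j + 2 ≤ 2*n
  · -- main case
    obtain ⟨q, hq⟩ : ∃ q, 2*n = j + q + 2 := ⟨2*n - j - 2, by omega⟩
    have key := gb_rec n j q hq
    have EEs : EE n (j+1) = EE (n+1) (j+2) := by
      rw [← EE_shift n (j+1)]
    have EEb : n + EE n (j+2) = (j+2) + EE (n+1) (j+2) := EE_right n (j+2)
    have EEc : (n+1) + EE n j = (q+2) + EE (n+1) (j+2) := by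
      rw [EE_left n j q hq, EEs]
    rw [cc, cc, cc, cc, show 2*(n+1) = 2*n+2 by ring, key, EEs]
    rw [show ((-1 : PowerSeries ℤ))^(j+2+(n+1)) = (-1 : PowerSeries ℤ)^(j+1+n) from seven (by omega)]
    rw [show ((-1 : PowerSeries ℤ))^(j+2+n) = -(-1 : PowerSeries ℤ)^(j+1+n) from sodd (by omega)]
    rw [show ((-1 : PowerSeries ℤ))^(j+n) = -(-1 : PowerSeries ℤ)^(j+1+n) from sodd (by omega)]
    have hx2 : (X : PowerSeries ℤ)^n * X^(EE n (j+2)) = X^(j+2) * X^(EE (n+1) (j+2)) := by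
      rw [← pow_add, ← pow_add, EEb]
    have hx3 : (X : PowerSeries ℤ)^(n+1) * X^(EE n j) = X^(q+2) * X^(EE (n+1) (j+2)) := by
      rw [← pow_add, ← pow_add, EEc]
    calc (-1 : PowerSeries ℤ)^(j+1+n) * (X^(EE (n+1) (j+2)) *
            ((1 + X^(2*n+1)) * gb (2*n) (j+1) + X^(j+2) * gb (2*n) (j+2) + X^(q+2) * gb (2*n) j))
        = (1 + X^(2*n+1)) * ((-1 : PowerSeries ℤ)^(j+1+n) * (X^(EE (n+1) (j+2)) * gb (2*n) (j+1)))
          + (-1 : PowerSeries ℤ)^(j+1+n) * ((X^(j+2) * X^(EE (n+1) (j+2))) * gb (2*n) (j+2))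
          + (-1 : PowerSeries ℤ)^(j+1+n) * ((X^(q+2) * X^(EE (n+1) (j+2))) * gb (2*n) j) := by
            ring
      _ = _ := by rw [← hx2, ← hx3]; ring
  · by_cases h2 : j + 2 = 2*n + 1
    · -- j = 2n - 1
      obtain ⟨m, rfl⟩ : ∃ m, n = m + 1 := ⟨n - 1, by omega⟩
      obtain rfl : j = 2*m+1 := by omega
      have hgb1 : gb (2*(m+1)+2) (2*m+1+2) = gb (2*(m+1)+2) 1 := by
        rw [gb_symm _ _ (by omega), show 2*(m+1)+2 - (2*m+1+2) = 1 by omega]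
      have hgb2 : gb (2*(m+1)) (2*m+1) = gb (2*(m+1)) 1 := by
        rw [gb_symm _ _ (by omega), show 2*(m+1) - (2*m+1) = 1 by omega]
      have hz : gb (2*(m+1)) (2*m+1+2) = 0 := gb_of_gt (by omega)
      have hz2 : gb (2*(m+1)) (2*m+1+1) = gb (2*(m+1)) (2*(m+1)) := by
        rw [show 2*m+1+1 = 2*(m+1) by ring]
      have key := gb_one_rec (m+1) (by omega)
      rw [cc, cc, cc, cc, show 2*(m+1+1) = 2*(m+1)+2 by ring, hgb1, hgb2, hz, hz2, gb_self, key]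
      have hE1 : EE (m+1+1) (2*m+1+2) = tri (m+1) := by
        unfold EE
        rw [if_pos (by omega), show 2*m+1+2 - (m+1+1) = m+1 by omega]
      have hE2 : EE (m+1) (2*m+1+1) = tri (m+1) := by
        unfold EE
        rw [if_pos (by omega), show 2*m+1+1 - (m+1) = m+1 by omega]
      have hE3 : EE (m+1) (2*m+1) = tri m := by
        unfold EE
        rw [if_pos (by omega), show 2*m+1 - (m+1) = m by omega]
      rw [hE1, hE2, hE3]
      rw [show ((-1 : PowerSeries ℤ))^(2*m+1+2+(m+1+1)) = (-1 : PowerSeries ℤ)^(2*m+1+1+(m+1)) from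
        seven (by omega)]
      rw [show ((-1 : PowerSeries ℤ))^(2*m+1+(m+1)) = -(-1 : PowerSeries ℤ)^(2*m+1+1+(m+1)) from
        sodd (by omega)]
      have hx : (X : PowerSeries ℤ)^(tri (m+1)) * X = X^(m+1+1) * X^(tri m) := by
        rw [← pow_succ, ← pow_add, tri_succ, show tri m + m + 1 + 1 = m+1+1+tri m by omega]
      calc (-1 : PowerSeries ℤ)^(2*m+1+1+(m+1)) *
              (X^(tri (m+1)) * (1 + X^(2*(m+1)+1) + X * gb (2*(m+1)) 1))
          = (1 + X^(2*(m+1)+1)) * ((-1 : PowerSeries ℤ)^(2*m+1+1+(m+1)) * (X^(tri (m+1)) * 1))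
            + (-1 : PowerSeries ℤ)^(2*m+1+1+(m+1)) * ((X^(tri (m+1)) * X) * gb (2*(m+1)) 1) := by
              ring
        _ = _ := by rw [hx]; ring
    · by_cases h3 : j + 2 = 2*n + 2
      · -- j = 2n
        obtain ⟨m, rfl⟩ : ∃ m, n = m + 1 := ⟨n - 1, by omega⟩
        obtain rfl : j = 2*m+2 := by omega
        have hz1 : gb (2*(m+1)) (2*m+2+1) = 0 := gb_of_gt (by omega)
        have hz2 : gb (2*(m+1)) (2*m+2+2) = 0 := gb_of_gt (by omega)
        have hs : gb (2*(m+1+1)) (2*m+2+2) = 1 := by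
          rw [show 2*m+2+2 = 2*(m+1+1) by ring, gb_self]
        have hs2 : gb (2*(m+1)) (2*m+2) = 1 := by
          rw [show 2*m+2 = 2*(m+1) by ring, gb_self]
        rw [cc, cc, cc, cc, hz1, hz2, hs, hs2]
        have hE1 : EE (m+1+1) (2*m+2+2) = tri (m+2) := by
          unfold EE
          rw [if_pos (by omega), show 2*m+2+2 - (m+1+1) = m+2 by omega]
        have hE2 : EE (m+1) (2*m+2) = tri (m+1) := by
          unfold EE
          rw [if_pos (by omega), show 2*m+2 - (m+1) = m+1 by omega]
        rw [hE1, hE2]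
        rw [show ((-1 : PowerSeries ℤ))^(2*m+2+2+(m+1+1)) = -(-1 : PowerSeries ℤ)^(2*m+2+(m+1)) from
          sodd (by omega)]
        have hx : (X : PowerSeries ℤ)^(tri (m+2)) = X^(m+1+1) * X^(tri (m+1)) := by
          rw [← pow_add, tri_succ, show m+1+1+tri (m+1) = tri (m+1) + (m+1) + 1 by omega]
        rw [hx]
        ring
      · -- all zero
        have hz0 : cc (n+1) (j+2) = 0 := cc_of_gt (by omega)
        have hz1 : cc n (j+1) = 0 := cc_of_gt (by omega)
        have hz2 : cc n (j+2) = 0 := cc_of_gt (by omega)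
        have hz3 : cc n j = 0 := cc_of_gt (by omega)
        rw [hz0, hz1, hz2, hz3]
        ring

lemma cc_zero (n : ℕ) : cc (n+1) 0 = - (X^n * cc n 0) := by
  cases n with
  | zero =>
    rw [cc, cc]
    norm_num [EE, tri, gb_zero_right]
  | succ m =>
    rw [cc, cc, gb_zero_right, gb_zero_right]
    have hE1 : EE (m+1+1) 0 = tri (m+1) := by
      unfold EE
      rw [if_neg (by omega), show m+1+1-0-1 = m+1 by omega]
    have hE2 : EE (m+1) 0 = tri m := by
      unfold EE
      rw [if_neg (by omega), show m+1-0-1 = m by omega]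
    rw [hE1, hE2]
    rw [show ((-1 : PowerSeries ℤ))^(0+(m+1+1)) = -(-1 : PowerSeries ℤ)^(0+(m+1)) from sodd (by omega)]
    have hx : (X : PowerSeries ℤ)^(tri (m+1)) = X^(m+1) * X^(tri m) := by
      rw [← pow_add, tri_succ, show m+1+tri m = tri m + m + 1 by omega]
    rw [hx]
    ring

lemma cc_one (n : ℕ) (hn : 1 ≤ n) :
    cc (n+1) 1 = (1 + X^(2*n+1)) * cc n 0 - X^n * cc n 1 := by
  obtain ⟨m, rfl⟩ : ∃ m, n = m + 1 := ⟨n - 1, by omega⟩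
  have key := gb_one_rec (m+1) (by omega)
  rw [cc, cc, cc, show 2*(m+1+1) = 2*(m+1)+2 by ring, key, gb_zero_right]
  have hE1 : EE (m+1+1) 1 = tri m := by
    unfold EE
    rw [if_neg (by omega), show m+1+1-1-1 = m by omega]
  have hE2 : EE (m+1) 0 = tri m := by
    unfold EE
    rw [if_neg (by omega), show m+1-0-1 = m by omega]
  have hE3 : (X : PowerSeries ℤ)^(m+1) * X^(EE (m+1) 1) = X^(tri m) * X := by
    rw [← pow_add, ← pow_succ]
    have hEv : EE (m+1) 1 + (m + 1) = tri m + 1 := by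
      cases m with
      | zero => simp [EE, tri]
      | succ k =>
        unfold EE
        rw [if_neg (by omega), (by omega : k + 1 + 1 - 1 - 1 = k), tri_succ]
        omega
    rw [show m + 1 + EE (m+1) 1 = EE (m+1) 1 + (m+1) by omega, hEv]
  rw [hE1, hE2]
  rw [show ((-1 : PowerSeries ℤ))^(1+(m+1+1)) = (-1 : PowerSeries ℤ)^(0+(m+1)) from seven (by omega)]
  rw [show ((-1 : PowerSeries ℤ))^(1+(m+1)) = -(-1 : PowerSeries ℤ)^(0+(m+1)) from sodd (by omega)]
  calc (-1 : PowerSeries ℤ)^(0+(m+1)) * (X^(tri m) * (1 + X^(2*(m+1)+1) + X * gb (2*(m+1)) 1))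
      = (1 + X^(2*(m+1)+1)) * ((-1 : PowerSeries ℤ)^(0+(m+1)) * (X^(tri m) * 1))
        + (-1 : PowerSeries ℤ)^(0+(m+1)) * ((X^(tri m) * X) * gb (2*(m+1)) 1) := by ring
    _ = _ := by rw [← hE3]; ring

noncomputable def w (j : ℕ) : PowerSeries ℤ := C (j : ℤ)

lemma w_succ (j : ℕ) : w (j+1) = w j + 1 := by
  simp [w]

lemma w_zero : w 0 = 0 := by simp [w]
lemma w_one : w 1 = 1 := by simp [w]

lemma peel2 (f : ℕ → PowerSeries ℤ) (N : ℕ) :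
    ∑ j ∈ range (N+2), f j = (∑ i ∈ range N, f (i+2)) + f 1 + f 0 := by
  rw [Finset.sum_range_succ' f (N+1), Finset.sum_range_succ' (fun i => f (i+1)) N]

lemma gb_two_one : gb 2 1 = 1 + X := by
  apply (isUnit_qg 1).mul_left_cancel
  rw [gb_one 2 (by omega)]
  have h01 : qg 0 1 = 1 - X^1 := by have := qg_succ 0; simpa using this
  rw [h01]
  ring

lemma cc_vals_1 : cc 1 0 = -1 ∧ cc 1 1 = 1 + X ∧ cc 1 2 = -X := by
  refine ⟨?_, ?_, ?_⟩
  · rw [cc]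
    norm_num [EE, tri, gb_zero_right]
  · rw [cc, gb_two_one]
    norm_num [EE, tri]
  · rw [cc, show 2*1 = 2 by rfl, gb_self]
    norm_num [EE, tri]

lemma sum0 : ∀ n : ℕ, 1 ≤ n → ∑ j ∈ range (2*n+3), cc n j = 0 := by
  intro n hn
  induction n, hn using Nat.le_induction with
  | base =>
    obtain ⟨h0, h1, h2⟩ := cc_vals_1
    rw [show 2*1+3 = 5 by rfl]
    rw [Finset.sum_range_succ, Finset.sum_range_succ, Finset.sum_range_succ,
      Finset.sum_range_succ, Finset.sum_range_one]
    rw [h0, h1, h2, cc_of_gt (by omega : 2*1 < 3), cc_of_gt (by omega : 2*1 < 4)]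
    ring
  | succ n hn ih =>
    have e6 : ∑ j ∈ range (2*n+4), cc n j = 0 := by
      rw [Finset.sum_range_succ, cc_of_gt (by omega), add_zero, ih]
    have e7 : ∑ j ∈ range (2*n+5), cc n j = 0 := by
      rw [Finset.sum_range_succ, cc_of_gt (by omega), add_zero, e6]
    have hA : ∑ i ∈ range (2*n+3), cc n (i+1) = - cc n 0 := by
      have h := Finset.sum_range_succ' (cc n) (2*n+3)
      rw [e6] at h
      linear_combination -h
    have hB : ∑ i ∈ range (2*n+3), cc n (i+2) = - cc n 1 - cc n 0 := by
      have h := peel2 (cc n) (2*n+3)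
      rw [e7] at h
      linear_combination -h
    rw [show 2*(n+1)+3 = (2*n+3)+2 by ring, peel2]
    rw [Finset.sum_congr rfl (fun i _ => cc_rec n i hn)]
    rw [Finset.sum_sub_distrib, Finset.sum_sub_distrib, ← Finset.mul_sum, ← Finset.mul_sum,
      ← Finset.mul_sum, hA, hB, ih, cc_zero n, cc_one n hn]
    ring

lemma sum1 : ∀ n : ℕ, 1 ≤ n → ∑ j ∈ range (2*n+3), w j * cc n j = qg 0 n * qg 0 (n-1) := by
  intro n hn
  induction n, hn using Nat.le_induction with
  | base =>
    obtain ⟨h0, h1, h2⟩ := cc_vals_1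
    rw [show 2*1+3 = 5 by rfl]
    rw [Finset.sum_range_succ, Finset.sum_range_succ, Finset.sum_range_succ,
      Finset.sum_range_succ, Finset.sum_range_one]
    rw [h0, h1, h2, cc_of_gt (by omega : 2*1 < 3), cc_of_gt (by omega : 2*1 < 4)]
    have hq0 : qg 0 0 = 1 := by simp [qg]
    have h01 : qg 0 1 = 1 - X^1 := by have := qg_succ 0; simpa using this
    rw [hq0, h01, w_zero, w_one, show (2:ℕ) = 1+1 by rfl, w_succ, w_one,
      show (3:ℕ) = 2+1 by rfl, show (4:ℕ) = 3+1 by rfl]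
    ring
  | succ n hn ih =>
    have hS0 := sum0 n hn
    have e6 : ∑ j ∈ range (2*n+4), w (j+1) * cc n j = ∑ j ∈ range (2*n+3), (w j + 1) * cc n j := by
      rw [Finset.sum_range_succ, cc_of_gt (by omega), mul_zero, add_zero]
      exact Finset.sum_congr rfl (fun j _ => by rw [w_succ])
    have hA : ∑ i ∈ range (2*n+3), w (i+2) * cc n (i+1)
        = ∑ j ∈ range (2*n+3), (w j + 1) * cc n j - w 1 * cc n 0 := by
      have h := Finset.sum_range_succ' (fun k => w (k+1) * cc n k) (2*n+3)
      rw [show 2*n+3+1 = 2*n+4 from by omega] at h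
      rw [e6] at h
      simp only [show ∀ k : ℕ, k+1+1 = k+2 from fun _ => rfl] at h
      rw [show 2*n+1+2 = 2*n+3 from by omega] at h
      linear_combination -h
    have e7 : ∑ j ∈ range (2*n+5), w j * cc n j = qg 0 n * qg 0 (n-1) := by
      rw [Finset.sum_range_succ, cc_of_gt (by omega), mul_zero, add_zero,
        Finset.sum_range_succ, cc_of_gt (by omega), mul_zero, add_zero, ih]
    have hB : ∑ i ∈ range (2*n+3), w (i+2) * cc n (i+2)
        = qg 0 n * qg 0 (n-1) - w 1 * cc n 1 - w 0 * cc n 0 := by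
      have h := peel2 (fun k => w k * cc n k) (2*n+3)
      rw [show 2*n+3+2 = 2*n+5 from by omega] at h
      rw [e7] at h
      linear_combination -h
    have hsplit : ∑ j ∈ range (2*n+3), (w j + 1) * cc n j
        = (∑ j ∈ range (2*n+3), w j * cc n j) + ∑ j ∈ range (2*n+3), cc n j := by
      rw [← Finset.sum_add_distrib]
      exact Finset.sum_congr rfl (fun j _ => by ring)
    rw [show 2*(n+1)+3 = (2*n+3)+2 by ring, peel2]
    rw [Finset.sum_congr rfl (fun i _ => by rw [cc_rec n i hn, w_succ, w_succ])]
    have hexp : ∀ i ∈ range (2*n+3),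
        (w i + 1 + 1) * ((1 + X^(2*n+1)) * cc n (i+1) - X^n * cc n (i+2) - X^(n+1) * cc n i)
        = (1 + X^(2*n+1)) * (w (i+2) * cc n (i+1)) - X^n * (w (i+2) * cc n (i+2))
          - X^(n+1) * ((w i + 1 + 1) * cc n i) := by
      intro i _
      rw [w_succ, w_succ]
      ring
    rw [Finset.sum_congr rfl hexp]
    rw [Finset.sum_sub_distrib, Finset.sum_sub_distrib, ← Finset.mul_sum, ← Finset.mul_sum,
      ← Finset.mul_sum]
    have h2 : ∑ j ∈ range (2*n+3), (w j + 1 + 1) * cc n j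
        = (∑ j ∈ range (2*n+3), w j * cc n j) + 2 * ∑ j ∈ range (2*n+3), cc n j := by
      rw [Finset.mul_sum, ← Finset.sum_add_distrib]
      exact Finset.sum_congr rfl (fun j _ => by ring)
    rw [hA, hB, h2, hsplit, ih, hS0, w_one, w_zero, show n+1-1 = n by omega]
    have hq1 : qg 0 (n+1) = qg 0 n * (1 - X^(n+1)) := by
      rw [← qg_mul (Nat.zero_le n) (Nat.le_succ n), qg_succ]
    have hq2 : qg 0 n = qg 0 (n-1) * (1 - X^n) := by
      obtain ⟨m, hm⟩ : ∃ m, n = m+1 := ⟨n-1, by omega⟩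
      rw [hm, show m+1-1 = m by omega, ← qg_mul (Nat.zero_le m) (Nat.le_succ m), qg_succ]
    have hx : (X : PowerSeries ℤ)^(2*n+1) = X^n * X^(n+1) := by
      rw [← pow_add]
      congr 1
      omega
    linear_combination (cc_one n hn) + (qg 0 n * qg 0 (n-1)) * hx - qg 0 n * hq1
      - (1 - X^(n+1)) * qg 0 n * hq2

lemma dvd_mul_sub_one {M : ℕ} {A B : PowerSeries ℤ} (hA : X^M ∣ A - 1) (hB : X^M ∣ B - 1) :
    X^M ∣ A * B - 1 := by
  have h : A * B - 1 = A * (B - 1) + (A - 1) := by ring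
  rw [h]
  exact dvd_add (Dvd.dvd.mul_left hB A) hA

lemma prod_sub_one_dvd (M : ℕ) (s : Finset ℕ) (h : ∀ m ∈ s, M ≤ m) :
    (X : PowerSeries ℤ)^M ∣ (∏ m ∈ s, (1 - (X : PowerSeries ℤ)^m)) - 1 := by
  classical
  induction s using Finset.induction_on with
  | empty => simp
  | @insert a s ha ih =>
    rw [Finset.prod_insert ha]
    refine dvd_mul_sub_one ?_ (ih fun m hm => h m (Finset.mem_insert_of_mem hm))
    have he : (1 - (X : PowerSeries ℤ)^a) - 1 = -X^a := by ring
    rw [he]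
    exact dvd_neg.mpr (pow_dvd_pow X (h a (Finset.mem_insert_self a s)))

lemma qg_dvd (M a b : ℕ) (h : M ≤ a + 1) : (X : PowerSeries ℤ)^M ∣ qg a b - 1 := by
  refine prod_sub_one_dvd M _ fun m hm => ?_
  have := (Finset.mem_Ioc.mp hm).1
  omega

lemma one_sub_dvd (M n : ℕ) (h : M ≤ n) : (X : PowerSeries ℤ)^M ∣ (1 - X^n) - 1 := by
  have he : (1 - (X : PowerSeries ℤ)^n) - 1 = -X^n := by ring
  rw [he]
  exact dvd_neg.mpr (pow_dvd_pow X h)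

/-- the key approximation: each term of the Jacobi sum times the completing factor
is congruent to `X^E` mod `X^n`. -/
lemma term_dvd (n j : ℕ) (hn : 1 ≤ n) :
    (X : PowerSeries ℤ)^n ∣ X^(EE n j) * ((1 - X^n) * qg 0 n * gb (2*n) j) - X^(EE n j) := by
  by_cases hj : j ≤ 2*n
  · -- in range
    have hU : (X : PowerSeries ℤ)^(n - EE n j) ∣ ((1 - X^n) * qg 0 n * gb (2*n) j) - 1 := by
      rw [gb, if_pos hj]
      by_cases hjn : j ≤ n
      · have h1 : (1 - X^n) * qg 0 n * (qg 0 (2*n) * qfi j * qfi (2*n - j))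
            = (1 - X^n) * ((qg 0 n * qfi j) * (qg 0 (2*n) * qfi (2*n - j))) := by ring
        rw [h1, qg_qfi j n hjn, qg_qfi (2*n - j) (2*n) (by omega)]
        have hE : n - j - 1 ≤ EE n j ∨ (n ≤ j) := by
          unfold EE
          rcases le_or_gt n j with h | h
          · right; exact h
          · left; rw [if_neg (by omega)]; exact le_tri _
        have hM1 : n - EE n j ≤ n := by omega
        have hM2 : n - EE n j ≤ j + 1 := by
          unfold EE at *
          rcases le_or_gt n j with h | h
          · omega
          · rw [if_neg (by omega)] at *
            have := le_tri (n - j - 1)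
            omega
        have hM3 : n - EE n j ≤ 2*n - j + 1 := by omega
        exact dvd_mul_sub_one (one_sub_dvd _ _ hM1)
          (dvd_mul_sub_one (qg_dvd _ _ _ hM2) (qg_dvd _ _ _ hM3))
      · have h1 : (1 - X^n) * qg 0 n * (qg 0 (2*n) * qfi j * qfi (2*n - j))
            = (1 - X^n) * ((qg 0 n * qfi (2*n - j)) * (qg 0 (2*n) * qfi j)) := by ring
        rw [h1, qg_qfi (2*n - j) n (by omega), qg_qfi j (2*n) hj]
        have hE : j - n ≤ EE n j := by
          unfold EE
          rw [if_pos (by omega)]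
          exact le_tri _
        have hM1 : n - EE n j ≤ n := by omega
        have hM2 : n - EE n j ≤ 2*n - j + 1 := by omega
        have hM3 : n - EE n j ≤ j + 1 := by omega
        exact dvd_mul_sub_one (one_sub_dvd _ _ hM1)
          (dvd_mul_sub_one (qg_dvd _ _ _ hM2) (qg_dvd _ _ _ hM3))
    have h2 : X^(EE n j) * ((1 - X^n) * qg 0 n * gb (2*n) j) - X^(EE n j)
        = X^(EE n j) * (((1 - X^n) * qg 0 n * gb (2*n) j) - 1) := by ring
    rw [h2]
    calc (X : PowerSeries ℤ)^n ∣ X^(EE n j) * X^(n - EE n j) := by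
          rw [← pow_add]
          apply pow_dvd_pow
          omega
      _ ∣ X^(EE n j) * (((1 - X^n) * qg 0 n * gb (2*n) j) - 1) := mul_dvd_mul_left _ hU
  · -- out of range : gb = 0
    rw [gb_of_gt (by omega)]
    have h2 : X^(EE n j) * ((1 - X^n) * qg 0 n * 0) - X^(EE n j) = -X^(EE n j) := by ring
    rw [h2]
    refine dvd_neg.mpr (pow_dvd_pow X ?_)
    have hE : j - n ≤ EE n j := by
      unfold EE
      rw [if_pos (by omega)]
      exact le_tri _
    omega

lemma negpow (k : ℕ) : (-1 : PowerSeries ℤ)^k = C ((-1)^k) := by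
  rw [map_pow, map_neg, map_one]

/-- the Jacobi coefficient extraction -/
lemma coeffJac (a : ℕ) :
    coeff a ((qg 0 (a+1))^3)
      = ∑ j ∈ range (2*(a+1)+3), (-1 : ℤ)^(j+(a+1)) * (j : ℤ) * (if a = EE (a+1) j then 1 else 0) := by
  set n := a + 1 with hn
  have hcube : (qg 0 n)^3 = ∑ j ∈ range (2*n+3), w j * ((1 - X^n) * qg 0 n * cc n j) := by
    have hs := sum1 n (by omega)
    rw [show n - 1 = a from by omega] at hs
    have hq2 : (1 - X^n) * qg 0 a = qg 0 n := by
      have h1 : (1 : PowerSeries ℤ) - X^n = qg a n := by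
        rw [hn, ← qg_succ]
      rw [h1, mul_comm, qg_mul (Nat.zero_le _) (by omega)]
    calc (qg 0 n)^3 = (1 - X^n) * qg 0 n * (qg 0 n * qg 0 a) := by
          rw [show (1 - X^n) * qg 0 n * (qg 0 n * qg 0 a)
            = ((1 - X^n) * qg 0 a) * (qg 0 n * qg 0 n) from by ring, hq2]
          ring
      _ = (1 - X^n) * qg 0 n * ∑ j ∈ range (2*n+3), w j * cc n j := by rw [hs]
      _ = _ := by
          rw [Finset.mul_sum]
          exact Finset.sum_congr rfl fun j _ => by ring
  have hdvd : (X : PowerSeries ℤ)^n ∣ (qg 0 n)^3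
      - ∑ j ∈ range (2*n+3), w j * ((-1 : PowerSeries ℤ)^(j+n) * X^(EE n j)) := by
    rw [hcube, ← Finset.sum_sub_distrib]
    refine Finset.dvd_sum fun j _ => ?_
    have he : w j * ((1 - X^n) * qg 0 n * cc n j) - w j * ((-1 : PowerSeries ℤ)^(j+n) * X^(EE n j))
        = (w j * (-1 : PowerSeries ℤ)^(j+n)) *
          (X^(EE n j) * ((1 - X^n) * qg 0 n * gb (2*n) j) - X^(EE n j)) := by
      rw [cc]
      ring
    rw [he]
    exact Dvd.dvd.mul_left (term_dvd n j (by omega)) _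
  have hc0 : coeff a ((qg 0 n)^3
      - ∑ j ∈ range (2*n+3), w j * ((-1 : PowerSeries ℤ)^(j+n) * X^(EE n j))) = 0 := by
    have := X_pow_dvd_iff.mp hdvd a (by omega)
    exact this
  rw [map_sub, sub_eq_zero] at hc0
  rw [hc0, map_sum]
  refine Finset.sum_congr rfl fun j _ => ?_
  rw [w, negpow, coeff_C_mul, coeff_C_mul, coeff_X_pow]
  ring

/-- the operator  q d/dq -/
noncomputable def DD (f : PowerSeries ℤ) : PowerSeries ℤ := mk fun k => (k : ℤ) * coeff k f

lemma coeff_DD (k : ℕ) (f : PowerSeries ℤ) : coeff k (DD f) = (k : ℤ) * coeff k f :=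
  coeff_mk _ _

lemma DD_mul (f g : PowerSeries ℤ) : DD (f * g) = DD f * g + f * DD g := by
  ext k
  rw [map_add, coeff_DD, coeff_mul, coeff_mul, coeff_mul, Finset.mul_sum, ← Finset.sum_add_distrib]
  refine Finset.sum_congr rfl fun p hp => ?_
  rw [coeff_DD, coeff_DD]
  have hp' := Finset.HasAntidiagonal.mem_antidiagonal.mp hp
  have hk : (k : ℤ) = (p.1 : ℤ) + (p.2 : ℤ) := by exact_mod_cast hp'.symm
  rw [hk]
  ring

lemma DD_one : DD 1 = 0 := by
  ext k
  rw [coeff_DD, coeff_one]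
  rcases k with _ | k <;> simp

lemma DD_sub (f g : PowerSeries ℤ) : DD (f - g) = DD f - DD g := by
  ext k
  rw [map_sub, coeff_DD, coeff_DD, coeff_DD, map_sub]
  ring

lemma DD_X_pow (b : ℕ) : DD (X^b) = C (b : ℤ) * X^b := by
  ext k
  rw [coeff_DD, coeff_C_mul, coeff_X_pow]
  by_cases h : k = b
  · rw [if_pos h, h]
  · rw [if_neg h]
    ring

lemma DD_cube (f : PowerSeries ℤ) : DD (f^3) = 3 * (f^2 * DD f) := by
  have h3 : f^3 = f * f * f := by ring
  have h2 : f * f = f^2 := by ring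
  rw [h3, DD_mul, DD_mul]
  rw [← h2]
  ring

/-- truncated sigma generating series -/
noncomputable def Sg (a t : ℕ) : PowerSeries ℤ :=
  ∑ m ∈ Finset.Ioc 0 t, C (m : ℤ) * (X^m * ∑ s ∈ range (a+1), (X^m)^s)

lemma main6 (a : ℕ) : ∀ t : ℕ, (X : PowerSeries ℤ)^(a+1) ∣
    3 * ((qg 0 t)^3 * Sg a t) + DD ((qg 0 t)^3) := by
  intro t
  induction t with
  | zero =>
    have h1 : qg 0 0 = 1 := by simp [qg]
    have h2 : Sg a 0 = 0 := by simp [Sg]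
    rw [h1, h2, one_pow, DD_one]
    simp
  | succ t ih =>
    have hq : qg 0 (t+1) = qg 0 t * (1 - X^(t+1)) := by
      rw [← qg_mul (Nat.zero_le t) (Nat.le_succ t), qg_succ]
    have hSg : Sg a (t+1) = Sg a t + C ((t+1 : ℕ) : ℤ) * (X^(t+1) * ∑ s ∈ range (a+1), (X^(t+1))^s) := by
      rw [Sg, Sg, Finset.sum_Ioc_succ_top (Nat.zero_le _)]
    have hD : DD ((qg 0 t * (1 - X^(t+1)))^3)
        = DD ((qg 0 t)^3) * ((1 - X^(t+1))^3)
          + (qg 0 t)^3 * (3 * ((1 - X^(t+1))^2 * (DD 1 - (C ((t+1 : ℕ) : ℤ) * X^(t+1))))) := by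
      rw [mul_pow, DD_mul, DD_cube, DD_cube, DD_sub, DD_X_pow]
    have htel : (∑ s ∈ range (a+1), (X^(t+1) : PowerSeries ℤ)^s) * (X^(t+1) - 1)
        = (X^(t+1))^(a+1) - 1 := geom_sum_mul _ _
    have key : 3 * ((qg 0 (t+1))^3 * Sg a (t+1)) + DD ((qg 0 (t+1))^3)
        = (1 - X^(t+1))^3 * (3 * ((qg 0 t)^3 * Sg a t) + DD ((qg 0 t)^3))
          + ((-3) * C ((t+1 : ℕ) : ℤ) * (qg 0 t)^3 * (1 - X^(t+1))^2 * X^(t+1))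
            * (X^(t+1))^(a+1) := by
      rw [hq, hSg, hD, DD_one]
      linear_combination (-3 * C ((t+1 : ℕ) : ℤ) * (qg 0 t)^3 * (1 - X^(t+1))^2 * X^(t+1)) * htel
    rw [key]
    refine dvd_add (Dvd.dvd.mul_left ih _) (Dvd.dvd.mul_left ?_ _)
    have : ((X : PowerSeries ℤ)^(t+1))^(a+1) = ((X : PowerSeries ℤ)^(a+1))^(t+1) := by
      rw [← pow_mul, ← pow_mul, Nat.mul_comm]
    rw [this]
    exact dvd_pow_self _ (by omega)

/-- S12 agrees with the truncated version up to degree a -/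
lemma S12_approx (a : ℕ) : (X : PowerSeries ℤ)^(a+1) ∣ S12 - Sg a a := by
  rw [X_pow_dvd_iff]
  intro i hi
  rw [map_sub, sub_eq_zero]
  have hcoe : coeff i (Sg a a)
      = ∑ m ∈ Finset.Ioc 0 a, (m : ℤ) * ∑ s ∈ range (a+1), (if i = m + m*s then 1 else 0) := by
    rw [Sg, map_sum]
    refine Finset.sum_congr rfl fun m hm => ?_
    have hx : (X : PowerSeries ℤ)^m * ∑ s ∈ range (a+1), (X^m)^s
        = ∑ s ∈ range (a+1), X^(m + m*s) := by
      rw [Finset.mul_sum]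
      exact Finset.sum_congr rfl fun s _ => by rw [← pow_mul, ← pow_add]
    rw [coeff_C_mul, hx, map_sum]
    congr 1
    exact Finset.sum_congr rfl fun s _ => by rw [coeff_X_pow]
  rw [hcoe, S12, coeff_mk]
  by_cases hi0 : i = 0
  · subst hi0
    rw [if_pos rfl]
    symm
    refine Finset.sum_eq_zero fun m hm => ?_
    have hm1 := (Finset.mem_Ioc.mp hm).1
    rw [Finset.sum_eq_zero fun s _ => by rw [if_neg (by omega)], mul_zero]
  · rw [if_neg hi0]
    have hinner : ∀ m ∈ Finset.Ioc 0 a, (m : ℤ) * ∑ s ∈ range (a+1), (if i = m + m*s then (1:ℤ) else 0)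
        = if m ∣ i then (m : ℤ) else 0 := by
      intro m hm
      obtain ⟨hm1, hm2⟩ := Finset.mem_Ioc.mp hm
      by_cases hdvd : m ∣ i
      · obtain ⟨c, hc⟩ := hdvd
        have hc1 : 1 ≤ c := by
          rcases Nat.eq_zero_or_pos c with h | h
          · subst h
            simp at hc
            omega
          · exact h
        have hcond : ∀ s, (i = m + m*s) ↔ (s = c - 1) := by
          intro s
          constructor
          · intro h
            rw [hc] at h
            have h2 : m * c = m * (s+1) := by rw [h]; ring
            have := Nat.eq_of_mul_eq_mul_left hm1 h2
            omega
          · intro h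
            subst h
            rw [hc]
            have : c - 1 + 1 = c := by omega
            calc m * c = m * (c - 1 + 1) := by rw [this]
              _ = m + m * (c-1) := by ring
        simp only [hcond]
        rw [Finset.sum_ite_eq' (range (a+1)) (c-1) (fun _ => (1:ℤ))]
        have hmem : c - 1 ∈ range (a+1) := by
          rw [Finset.mem_range]
          have : c ≤ i := by
            calc c ≤ m * c := Nat.le_mul_of_pos_left c hm1
              _ = i := hc.symm
          omega
        rw [if_pos hmem, if_pos ⟨c, hc⟩, mul_one]
      · rw [if_neg hdvd, Finset.sum_eq_zero fun s _ => ?_, mul_zero]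
        rw [if_neg]
        intro h
        exact hdvd ⟨s+1, by rw [h]; ring⟩
    rw [Finset.sum_congr rfl hinner]
    rw [Finset.sum_ite, Finset.sum_const_zero, add_zero]
    have hset : (Finset.Ioc 0 a).filter (· ∣ i) = i.divisors := by
      ext m
      rw [Finset.mem_filter, Finset.mem_Ioc, Nat.mem_divisors]
      constructor
      · rintro ⟨⟨h1, h2⟩, h3⟩
        exact ⟨h3, hi0⟩
      · rintro ⟨h1, h2⟩
        have hpos : 0 < m := Nat.pos_of_dvd_of_pos h1 (by omega)
        have hle : m ≤ i := Nat.le_of_dvd (by omega) h1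
        exact ⟨⟨hpos, by omega⟩, h1⟩
    rw [hset]

/-- the key derivative relation at coefficient a -/
lemma deriv_rel (a : ℕ) :
    3 * coeff a ((qg 0 a)^3 * S12) + (a : ℤ) * coeff a ((qg 0 a)^3) = 0 := by
  have h1 := main6 a a
  have h2 : (X : PowerSeries ℤ)^(a+1) ∣ 3 * ((qg 0 a)^3 * S12) + DD ((qg 0 a)^3) := by
    have heq : 3 * ((qg 0 a)^3 * S12) + DD ((qg 0 a)^3)
        = (3 * ((qg 0 a)^3 * Sg a a) + DD ((qg 0 a)^3)) + (3 * (qg 0 a)^3) * (S12 - Sg a a) := by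
      ring
    rw [heq]
    exact dvd_add h1 (Dvd.dvd.mul_left (S12_approx a) _)
  have h3 := X_pow_dvd_iff.mp h2 a (by omega)
  have h4 : 3 * ((qg 0 a)^3 * S12) + DD ((qg 0 a)^3)
      = ((qg 0 a)^3 * S12 + (qg 0 a)^3 * S12 + (qg 0 a)^3 * S12) + DD ((qg 0 a)^3) := by
    ring
  rw [h4, map_add, map_add, map_add, coeff_DD] at h3
  linarith [h3]

lemma tri_inj : Function.Injective tri := tri_strictMono.injective

lemma tri_formula (n : ℕ) : 1 + n*(n+3)/2 = tri (n+1) := by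
  induction n with
  | zero => rfl
  | succ n ih =>
    have h1 : (n+1)*(n+1+3) = n*(n+3) + 2*(n+2) := by ring
    rw [h1, Nat.add_mul_div_left _ _ (by norm_num : (0:ℕ) < 2), tri_succ]
    omega

lemma htri (m : ℕ) : 2 * tri m = m*(m+1) := by
  induction m with
  | zero => rfl
  | succ m ih =>
    have h1 : (m+1)*(m+1+1) = m*(m+1) + 2*(m+1) := by ring
    rw [tri_succ, h1]
    omega

lemma helper2 (k : ℕ) : 2 * ((k+1).choose 2) = k*(k+1) := by
  induction k with
  | zero => rfl
  | succ k ih =>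
    have h := Nat.choose_succ_succ' (k+1) 1
    rw [Nat.choose_one_right] at h
    rw [show k+1+1 = (k+1)+1 from rfl, show (2:ℕ) = 1+1 from rfl, h]
    have h1 : (k+1)*(k+1+1) = k*(k+1) + 2*(k+1) := by ring
    rw [show (1:ℕ)+1 = 2 from rfl] at *
    omega

lemma helper6 (k : ℕ) : 6 * ((k+2).choose 3) = k*(k+1)*(k+2) := by
  induction k with
  | zero => rfl
  | succ k ih =>
    have h := Nat.choose_succ_succ' (k+2) 2
    rw [show k+1+2 = (k+2)+1 from rfl, show (3:ℕ) = 2+1 from rfl, h]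
    have h2 := helper2 (k+1)
    rw [show k+1+1 = k+2 from rfl] at h2
    have h1 : (k+1)*(k+1+1)*(k+1+2) = k*(k+1)*(k+2) + 3*((k+1)*(k+2)) := by ring
    rw [show (2:ℕ)+1 = 3 from rfl] at *
    rw [show k+1+1 = k+2 from rfl, show k+1+2 = k+2+1 from rfl] at *
    omega

lemma choose_tri (m : ℕ) (hm : 1 ≤ m) :
    3 * (((m+2).choose 3 : ℤ) + ((m+1).choose 3 : ℤ)) = (tri m : ℤ) * (2*(m:ℤ)+1) := by
  obtain ⟨m', rfl⟩ : ∃ m', m = m' + 1 := ⟨m - 1, by omega⟩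
  have hnat : 2 * (3 * ((m'+1+2).choose 3 + (m'+1+1).choose 3)) = 2 * tri (m'+1) * (2*(m'+1)+1) := by
    have h1 := helper6 (m'+1)
    have h2 := helper6 m'
    have h3 := htri (m'+1)
    rw [show m'+1+1 = m'+2 from rfl, show m'+1+2 = m'+2+1 from rfl] at *
    have hr : (m'+1)*(m'+2)*(m'+2+1) + m'*(m'+1)*(m'+2) = (m'+1)*(m'+2) * (2*(m'+1)+1) := by ring
    rw [show 2 * tri (m'+1) * (2*(m'+1)+1) = (2 * tri (m'+1)) * (2*(m'+1)+1) from rfl, h3]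
    omega
  push_cast
  push_cast at hnat
  linarith [hnat]

/-- the final combinatorial matching -/
lemma final_sum (a : ℕ) :
    3 * (∑ n' ∈ range (a+1), if 1 + n'*(n'+3)/2 = a
        then (-1:ℤ)^n' * (((n'+3).choose 3 : ℤ) + ((n'+2).choose 3 : ℤ)) else 0)
    = -(a:ℤ) * ∑ j ∈ range (2*(a+1)+3),
        (-1 : ℤ)^(j+(a+1)) * (j : ℤ) * (if a = EE (a+1) j then 1 else 0) := by
  by_cases hex : ∃ m, tri m = a
  · obtain ⟨m, hm⟩ := hex
    rcases Nat.eq_zero_or_pos m with hm0 | hmpos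
    · -- m = 0, a = 0
      subst hm0
      have ha : a = 0 := by rw [← hm]; rfl
      subst ha
      rw [Finset.sum_eq_zero fun n' _ => by rw [if_neg (by omega)]]
      ring
    · -- m ≥ 1, a = tri m ≥ 1
      obtain ⟨k, rfl⟩ : ∃ k, m = k + 1 := ⟨m - 1, by omega⟩
      set m := k + 1 with hmdef
      have ham : m ≤ a := by rw [← hm]; exact le_tri m
      have ha1 : 1 ≤ a := by
        have := le_tri m
        omega
      -- LHS
      have hL : (∑ n' ∈ range (a+1), if 1 + n'*(n'+3)/2 = a
          then (-1:ℤ)^n' * (((n'+3).choose 3 : ℤ) + ((n'+2).choose 3 : ℤ)) else 0)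
          = (-1:ℤ)^k * (((k+3).choose 3 : ℤ) + ((k+2).choose 3 : ℤ)) := by
        rw [Finset.sum_eq_single_of_mem k (by rw [Finset.mem_range]; omega)]
        · rw [if_pos (by rw [tri_formula]; exact hm)]
        · intro b _ hb
          rw [if_neg]
          intro hcond
          rw [tri_formula] at hcond
          have := tri_inj (hcond.trans hm.symm)
          omega
      -- RHS
      have hR : (∑ j ∈ range (2*(a+1)+3),
          (-1 : ℤ)^(j+(a+1)) * (j : ℤ) * (if a = EE (a+1) j then 1 else 0))
          = (-1:ℤ)^m * (2*(m:ℤ)+1) := by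
        have hcond : ∀ j, (a = EE (a+1) j) ↔ (j = a+1+m ∨ j = a-m) := by
          intro j
          unfold EE
          rcases le_or_gt (a+1) j with h | h
          · rw [if_pos h]
            constructor
            · intro hc
              left
              have := tri_inj (hm.trans hc)
              omega
            · rintro (rfl | rfl)
              · rw [show a+1+m - (a+1) = m from by omega, hm]
              · omega
          · rw [if_neg (by omega)]
            constructor
            · intro hc
              right
              have := tri_inj (hm.trans hc)
              omega
            · rintro (rfl | rfl)
              · omega
              · rw [show a+1 - (a-m) - 1 = m from by omega, hm]
        have hsub : ({a-m, a+1+m} : Finset ℕ) ⊆ range (2*(a+1)+3) := by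
          intro x hx
          rw [Finset.mem_insert, Finset.mem_singleton] at hx
          rw [Finset.mem_range]
          rcases hx with rfl | rfl <;> omega
        rw [← Finset.sum_subset hsub ?hz]
        case hz =>
          intro x _ hx
          rw [Finset.mem_insert, Finset.mem_singleton] at hx
          push_neg at hx
          rw [if_neg, mul_zero]
          rw [hcond]
          push_neg
          exact ⟨hx.2, hx.1⟩
        rw [Finset.sum_pair (by omega : a - m ≠ a+1+m)]
        rw [if_pos (by rw [hcond]; right; rfl), if_pos (by rw [hcond]; left; rfl)]
        have hp1 : (-1:ℤ)^(a-m+(a+1)) = (-1:ℤ)^(m+1) := by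
          rw [show a-m+(a+1) = (m+1) + 2*(a-m) from by omega, pow_add, pow_mul]
          norm_num
        have hp2 : (-1:ℤ)^(a+1+m+(a+1)) = (-1:ℤ)^m := by
          rw [show a+1+m+(a+1) = m + 2*(a+1) from by omega, pow_add, pow_mul]
          norm_num
        rw [hp1, hp2]
        have hc1 : ((a - m : ℕ) : ℤ) = (a:ℤ) - m := by
          push_cast [ham]
          ring
        have hc2 : ((a+1+m : ℕ) : ℤ) = (a:ℤ)+1+m := by push_cast; ring
        rw [hc1, hc2, pow_succ]
        ring
      have hct := choose_tri m hmpos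
      rw [show m+2 = k+3 from rfl, show m+1 = k+2 from rfl] at hct
      have hcast : ((tri m : ℕ) : ℤ) = (a : ℤ) := by exact_mod_cast hm
      rw [hL, hR]
      push_cast at hct hcast ⊢
      have hmk : (m:ℤ) = k+1 := by omega
      linear_combination ((-1:ℤ)^k) * hct + ((-1:ℤ)^k * (2*(k:ℤ)+3)) * hcast
        + (2*(-1:ℤ)^k*((tri m:ℤ) - a)) * hmk
  · push_neg at hex
    rw [Finset.sum_eq_zero fun n' _ => ?_, Finset.sum_eq_zero fun j _ => ?_]
    · ring
    · rw [if_neg, mul_zero]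
      unfold EE
      rcases le_or_gt (a+1) j with h | h
      · rw [if_pos h]
        exact fun hc => hex _ hc.symm
      · rw [if_neg (by omega)]
        exact fun hc => hex _ hc.symm
    · rw [if_neg]
      rw [tri_formula]
      exact fun hc => hex _ hc

end

end JacobiAux

/-- The formal `q`-series identity `η(q)³ · ∑_{n≥1} σ₁(n) qⁿ
= ∑_{n≥0} (−1)^n (C(n+3,3) + C(n+2,3)) q^{(3+2n)²/8 − 1/8}`, equivalently
`sch_{W_{S₃}}(q) = (1 − E₂(q))/24`.  After cancelling the overall factor `q^{1/8}`
of `η(q)³ = q^{1/8} ∏_{m≥1} (1 − q^m)³`, this reads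
`∏_{m≥1} (1 − q^m)³ · ∑ σ₁(n) qⁿ = ∑_{n≥0} (−1)^n (C(n+3,3)+C(n+2,3)) q^{1+n(n+3)/2}`;
the infinite product is expressed coefficientwise via the (sufficient) truncated
products `∏_{m=1}^{j} (1 − q^m)³`. -/
theorem stmt12 :
    ∀ j : ℕ,
      coeff j ((∏ m ∈ Finset.Icc 1 j, (1 - (X : PowerSeries ℤ) ^ m) ^ 3) * S12) =
        coeff j T12 := by
  intro a
  have hicc : Finset.Icc 1 a = Finset.Ioc 0 a := by
    ext x
    simp only [Finset.mem_Icc, Finset.mem_Ioc]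
    omega
  have hprod : (∏ m ∈ Finset.Icc 1 a, (1 - (X : PowerSeries ℤ)^m)^3) = (qg 0 a)^3 := by
    rw [hicc, Finset.prod_pow, qg]
  have hq : qg 0 (a+1) = qg 0 a * (1 - X^(a+1)) := by
    rw [← qg_mul (Nat.zero_le a) (Nat.le_succ a), qg_succ]
  have hstab : coeff a ((qg 0 (a+1))^3) = coeff a ((qg 0 a)^3) := by
    have hdvd : (X : PowerSeries ℤ)^(a+1) ∣ (qg 0 (a+1))^3 - (qg 0 a)^3 :=
      ⟨(qg 0 a)^3 * (-3 + 3*X^(a+1) - X^(a+1)*X^(a+1)), by rw [hq]; ring⟩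
    have h0 := X_pow_dvd_iff.mp hdvd a (by omega)
    rw [map_sub, sub_eq_zero] at h0
    exact h0
  rw [hprod]
  apply mul_left_cancel₀ (show (3:ℤ) ≠ 0 from by norm_num)
  calc 3 * coeff a ((qg 0 a)^3 * S12)
      = -(a:ℤ) * coeff a ((qg 0 a)^3) := by linarith [deriv_rel a]
    _ = -(a:ℤ) * coeff a ((qg 0 (a+1))^3) := by rw [hstab]
    _ = -(a:ℤ) * ∑ j ∈ range (2*(a+1)+3),
          (-1 : ℤ)^(j+(a+1)) * (j : ℤ) * (if a = EE (a+1) j then 1 else 0) := by rw [coeffJac]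
    _ = 3 * (∑ n' ∈ range (a+1), if 1 + n'*(n'+3)/2 = a
          then (-1:ℤ)^n' * (((n'+3).choose 3 : ℤ) + ((n'+2).choose 3 : ℤ)) else 0) :=
        (final_sum a).symm
    _ = 3 * coeff a T12 := by rw [T12, coeff_mk]
end
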